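/- arXiv:2203.01249 — 5 statements merged into one kernel-verified Lean document; each statement's English description precedes it below -/
import Mathlib

section
/- For every integer n ≥ 1, Σ_{m ∈ ℤ} (m² + n²)^{−3/2} = 2/n² + (8π/n)·Σ_{j=1}^∞ j·K₁(2πjn), where both sides converge absolutely. -/
open scoped BigOperators
open MeasureTheory

/-- A spin configuration on `ℤ²` (intended values `±1`). -/
abbrev SpinConfig := ℤ × ℤ → ℝ

/-- `σ` takes values in `{−1,+1}`. -/
def IsSpin (σ : SpinConfig) : Prop := ∀ x, σ x = 1 ∨ σ x = -1

/-- `σ` is `L`-periodic in both coordinate directions. -/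
def IsPeriodic (L : ℕ) (σ : SpinConfig) : Prop :=
  ∀ x : ℤ × ℤ, σ (x.1 + L, x.2) = σ x ∧ σ (x.1, x.2 + L) = σ x

/-- The box `Λ_L = {0,…,L−1}²`. -/
noncomputable def box (L : ℕ) : Finset (ℤ × ℤ) :=
  Finset.Icc (0:ℤ) ((L:ℤ) - 1) ×ˢ Finset.Icc (0:ℤ) ((L:ℤ) - 1)

/-- The dipolar kernel `1/|v|³`, interpreted as `0` at `v = 0`. -/
noncomputable def dipKer (v : ℤ × ℤ) : ℝ :=
  if v = 0 then 0 else 1 / (((v.1 : ℝ)^2 + (v.2 : ℝ)^2) ^ ((3:ℝ)/2))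

/-- The torus Hamiltonian `H_L(σ)`. -/
noncomputable def torusH (J : ℝ) (L : ℕ) (σ : SpinConfig) : ℝ :=
  -(J/2) * ∑ x ∈ box L, ∑ y ∈ box L,
      (if (x.1 - y.1)^2 + (x.2 - y.2)^2 = 1 then σ x * σ y - 1 else 0)
  + (1/2) * ∑ x ∈ box L, ∑ y ∈ box L,
      ∑' m : ℤ × ℤ, (σ x * σ y - 1) * dipKer (x.1 - y.1 + L * m.1, x.2 - y.2 + L * m.2)

/-- The energy per site `E(σ) = H_L(σ)/L²` of an `L`-periodic configuration. -/
noncomputable def energyPerSite (J : ℝ) (L : ℕ) (σ : SpinConfig) : ℝ :=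
  torusH J L σ / (L : ℝ)^2

/-- The periodic striped configuration `σ_s(h)(x) = (−1)^⌊x₂/h⌋`. -/
noncomputable def stripeConfig (h : ℕ) : SpinConfig :=
  fun x => (-1 : ℝ) ^ (Int.fdiv x.2 (h:ℤ))

/-- `E_s(h)`, the energy per site of the striped configuration of width `h`. -/
noncomputable def stripeEnergy (J : ℝ) (h : ℕ) : ℝ :=
  energyPerSite J (2*h) (stripeConfig h)

/-- The periodic checkerboard configuration `σ_c(h₁,h₂)(x) = (−1)^{⌊x₁/h₁⌋+⌊x₂/h₂⌋}`. -/
noncomputable def checkConfig (h₁ h₂ : ℕ) : SpinConfig :=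
  fun x => (-1 : ℝ) ^ (Int.fdiv x.1 (h₁:ℤ) + Int.fdiv x.2 (h₂:ℤ))

/-- `E(h₁,h₂)`, the energy per site of the checkerboard configuration. -/
noncomputable def checkEnergy (J : ℝ) (h₁ h₂ : ℕ) : ℝ :=
  energyPerSite J (2*h₁*h₂) (checkConfig h₁ h₂)

/-- The modified Bessel function `K₁(x) = (1/(2x)) ∫ e^{ixt} (t²+1)^{−3/2} dt`. -/
noncomputable def K1 (x : ℝ) : ℝ :=
  (1/(2*x)) * (∫ t : ℝ, Complex.exp (Complex.I * (x:ℂ) * (t:ℂ)) / ((t:ℂ)^2 + 1) ^ ((3:ℂ)/2)).re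

/-- `α_s = 2(1 + γ − log(π/2) + 4π Σ_{j,n ≥ 1} j K₁(2πjn))`. -/
noncomputable def alphaS : ℝ :=
  2 * (1 + Real.eulerMascheroniConstant - Real.log (Real.pi / 2)
    + 4 * Real.pi * ∑' (j : ℕ+) (n : ℕ+), (j : ℝ) * K1 (2 * Real.pi * j * n))

/-- `h*` is the unique minimizer of `h ↦ E_s(h)` over the positive integers. -/
def IsUniqueMinimizer (J : ℝ) (hstar : ℕ) : Prop :=
  0 < hstar ∧ ∀ h : ℕ, 0 < h → h ≠ hstar → stripeEnergy J hstar < stripeEnergy J h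

/-- `c_I = (2/(π√e)) e^{−α_s/2}`. -/
noncomputable def cI : ℝ := (2 / (Real.pi * Real.sqrt (Real.exp 1))) * Real.exp (-alphaS/2)

/-- `c_II(δ) = (129/(9π)) e^{−α_s/2 + 4δ}`. -/
noncomputable def cII (δ : ℝ) : ℝ := (129 / (9 * Real.pi)) * Real.exp (-alphaS/2 + 4*δ)

/-- `c_III(δ) = (2/π) e^{2 − α_s/2 − δ/4 − δ²}`. -/
noncomputable def cIII (δ : ℝ) : ℝ := (2 / Real.pi) * Real.exp (2 - alphaS/2 - δ/4 - δ^2)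


section PoissonAuxSection

open MeasureTheory Filter Asymptotics Set Topology
open scoped FourierTransform Real

namespace PoissonAux

noncomputable def G (c : ℝ) (t : ℝ) : ℝ := (t^2 + c) ^ (-(3:ℝ)/2)
noncomputable def G1 (c : ℝ) (t : ℝ) : ℝ := (-3*t) * (t^2+c) ^ (-(5:ℝ)/2)
noncomputable def G2 (c : ℝ) (t : ℝ) : ℝ :=
  (-3) * (t^2+c) ^ (-(5:ℝ)/2) + (15*t^2) * (t^2+c) ^ (-(7:ℝ)/2)
noncomputable def F (c : ℝ) : ℝ → ℂ := fun t => (G c t : ℂ)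
noncomputable def auxI (x : ℝ) : ℂ :=
  ∫ t : ℝ, Complex.exp (Complex.I * (x:ℂ) * (t:ℂ)) / ((t:ℂ)^2 + 1) ^ ((3:ℂ)/2)

variable {c : ℝ}

lemma K1_eq (x : ℝ) : K1 x = (1/(2*x)) * (auxI x).re := rfl

lemma base_pos (hc : 0 < c) (t : ℝ) : 0 < t^2 + c := by positivity

lemma G_nonneg (hc : 0 < c) (t : ℝ) : 0 ≤ G c t := by
  unfold G; exact Real.rpow_nonneg (base_pos hc t).le _

lemma cont_rpow (hc : 0 < c) (e : ℝ) : Continuous fun t : ℝ => (t^2+c) ^ e :=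
  ((continuous_pow 2).add continuous_const).rpow_const
    fun t => Or.inl (base_pos hc t).ne'

lemma rpow_le_inv_one_add_sq (hc : 0 < c) {e : ℝ} (he : e ≤ -1) (t : ℝ) :
    (t^2+c) ^ e ≤ (min c 1) ^ e * (1 + t^2)⁻¹ := by
  have hm : 0 < min c 1 := lt_min hc one_pos
  have h1 : min c 1 * (1 + t^2) ≤ t^2 + c := by
    have h2 : min c 1 ≤ c := min_le_left _ _
    have h3 : min c 1 * t^2 ≤ t^2 := by
      nlinarith [min_le_right c 1, sq_nonneg t]
    nlinarith
  have hpos : 0 < min c 1 * (1 + t^2) := by positivity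
  have step1 : (t^2+c) ^ e ≤ (min c 1 * (1 + t^2)) ^ e :=
    Real.rpow_le_rpow_of_nonpos hpos h1 (he.trans (by norm_num))
  have step2 : (min c 1 * (1 + t^2)) ^ e = (min c 1) ^ e * (1 + t^2) ^ e :=
    Real.mul_rpow hm.le (by positivity)
  have step3 : (1 + t^2) ^ e ≤ (1 + t^2) ^ (-1:ℝ) :=
    Real.rpow_le_rpow_of_exponent_le (by nlinarith [sq_nonneg t]) he
  have step4 : (1 + t^2) ^ (-1:ℝ) = (1 + t^2)⁻¹ := Real.rpow_neg_one _
  calc (t^2+c) ^ e ≤ (min c 1) ^ e * (1 + t^2) ^ e := by rw [← step2]; exact step1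
    _ ≤ (min c 1) ^ e * (1 + t^2)⁻¹ := by
        rw [← step4]
        exact mul_le_mul_of_nonneg_left step3 (Real.rpow_nonneg hm.le _)

lemma integrable_rpow (hc : 0 < c) {e : ℝ} (he : e ≤ -1) :
    Integrable fun t : ℝ => (t^2+c) ^ e := by
  refine Integrable.mono' ((integrable_inv_one_add_sq).const_mul ((min c 1) ^ e))
    (cont_rpow hc e).aestronglyMeasurable (ae_of_all _ fun t => ?_)
  rw [Real.norm_eq_abs, abs_of_nonneg (Real.rpow_nonneg (base_pos hc t).le _)]
  exact rpow_le_inv_one_add_sq hc he t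

lemma abs_le_rpow_half (hc : 0 < c) (t : ℝ) : |t| ≤ (t^2+c) ^ ((1:ℝ)/2) := by
  rw [← Real.sqrt_eq_rpow, ← Real.sqrt_sq_eq_abs]
  exact Real.sqrt_le_sqrt (by nlinarith)

lemma rpow_add_base (hc : 0 < c) (t a b : ℝ) :
    (t^2+c) ^ (a+b) = (t^2+c) ^ a * (t^2+c) ^ b := Real.rpow_add (base_pos hc t) a b

lemma integrable_G (hc : 0 < c) : Integrable (G c) :=
  integrable_rpow hc (by norm_num)

lemma integrable_G1 (hc : 0 < c) : Integrable (G1 c) := by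
  refine Integrable.mono' ((integrable_rpow hc (e := -2) (by norm_num)).const_mul 3)
    ?_ (ae_of_all _ fun t => ?_)
  · exact ((continuous_const.mul continuous_id).mul (cont_rpow hc _)).aestronglyMeasurable
  · have h1 : |t| * (t^2+c) ^ (-(5:ℝ)/2) ≤ (t^2+c) ^ ((1:ℝ)/2) * (t^2+c) ^ (-(5:ℝ)/2) :=
      mul_le_mul_of_nonneg_right (abs_le_rpow_half hc t)
        (Real.rpow_nonneg (base_pos hc t).le _)
    have h2 : (t^2+c) ^ ((1:ℝ)/2) * (t^2+c) ^ (-(5:ℝ)/2) = (t^2+c) ^ (-2:ℝ) := by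
      rw [← rpow_add_base hc]; norm_num
    rw [Real.norm_eq_abs, G1, abs_mul, abs_mul]
    calc |(-3:ℝ)| * |t| * |(t^2+c) ^ (-(5:ℝ)/2)|
        = 3 * (|t| * (t^2+c) ^ (-(5:ℝ)/2)) := by
          rw [abs_of_nonneg (Real.rpow_nonneg (base_pos hc t).le _)]
          norm_num; ring
      _ ≤ 3 * (t^2+c) ^ (-2:ℝ) := by
          rw [← h2]; exact mul_le_mul_of_nonneg_left h1 (by norm_num)

lemma integrable_G2 (hc : 0 < c) : Integrable (G2 c) := by
  refine Integrable.mono' ((integrable_rpow hc (e := -(5:ℝ)/2) (by norm_num)).const_mul 18)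
    ?_ (ae_of_all _ fun t => ?_)
  · exact ((continuous_const.mul (cont_rpow hc _)).add
      ((continuous_const.mul (continuous_pow 2)).mul (cont_rpow hc _))).aestronglyMeasurable
  · have hb := base_pos hc t
    have h1 : t^2 * (t^2+c) ^ (-(7:ℝ)/2) ≤ (t^2+c) ^ (-(5:ℝ)/2) := by
      have : (t^2+c) * (t^2+c) ^ (-(7:ℝ)/2) = (t^2+c) ^ (-(5:ℝ)/2) := by
        rw [show (-(5:ℝ)/2) = 1 + (-(7:ℝ)/2) by norm_num, rpow_add_base hc,
          Real.rpow_one]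
      calc t^2 * (t^2+c) ^ (-(7:ℝ)/2) ≤ (t^2+c) * (t^2+c) ^ (-(7:ℝ)/2) :=
            mul_le_mul_of_nonneg_right (by nlinarith) (Real.rpow_nonneg hb.le _)
        _ = _ := this
    rw [Real.norm_eq_abs, G2]
    have hr5 : (0:ℝ) ≤ (t^2+c) ^ (-(5:ℝ)/2) := Real.rpow_nonneg hb.le _
    have hr7 : (0:ℝ) ≤ (t^2+c) ^ (-(7:ℝ)/2) := Real.rpow_nonneg hb.le _
    calc |(-3) * (t^2+c) ^ (-(5:ℝ)/2) + (15*t^2) * (t^2+c) ^ (-(7:ℝ)/2)|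
        ≤ 3 * (t^2+c) ^ (-(5:ℝ)/2) + 15 * (t^2 * (t^2+c) ^ (-(7:ℝ)/2)) := by
          refine (abs_add_le _ _).trans ?_
          rw [abs_mul, abs_mul]
          apply add_le_add
          · rw [abs_of_nonneg hr5]; norm_num
          · rw [abs_of_nonneg hr7, abs_of_nonneg (by positivity : (0:ℝ) ≤ 15*t^2)]; ring_nf; rfl
      _ ≤ 3 * (t^2+c) ^ (-(5:ℝ)/2) + 15 * (t^2+c) ^ (-(5:ℝ)/2) := by nlinarith
      _ = 18 * (t^2+c) ^ (-(5:ℝ)/2) := by ring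

lemma hasDerivAt_base (t : ℝ) : HasDerivAt (fun t : ℝ => t^2 + c) (2*t) t := by
  simpa using (hasDerivAt_pow 2 t).add_const c

lemma hasDerivAt_G (hc : 0 < c) (t : ℝ) : HasDerivAt (G c) (G1 c t) t := by
  have h := (hasDerivAt_base (c := c) t).rpow_const
    (p := -(3:ℝ)/2) (Or.inl (base_pos hc t).ne')
  convert h using 1
  · rfl
  rw [show (-(3:ℝ)/2 - 1) = -(5:ℝ)/2 by norm_num] at *
  unfold G1; ring

lemma hasDerivAt_G1 (hc : 0 < c) (t : ℝ) : HasDerivAt (G1 c) (G2 c t) t := by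
  have h5 := (hasDerivAt_base (c := c) t).rpow_const
    (p := -(5:ℝ)/2) (Or.inl (base_pos hc t).ne')
  have hlin : HasDerivAt (fun t : ℝ => -3*t) (-3 : ℝ) t := by
    simpa using (hasDerivAt_id t).const_mul (-3 : ℝ)
  have := hlin.mul h5
  convert this using 1
  · rfl
  · rfl
  · rfl
  rw [show (-(5:ℝ)/2 - 1) = -(7:ℝ)/2 by norm_num] at *
  unfold G2; ring

lemma contDiff_G (hc : 0 < c) : ContDiff ℝ 2 (G c) := by
  rw [contDiff_iff_contDiffAt]
  intro t
  exact (((contDiff_id.pow 2).add contDiff_const).contDiffAt).rpow_const_of_ne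
    (base_pos hc t).ne'

lemma contDiff_F (hc : 0 < c) : ContDiff ℝ 2 (F c) :=
  Complex.ofRealCLM.contDiff.comp (contDiff_G hc)

lemma deriv_F (hc : 0 < c) : deriv (F c) = fun t => (G1 c t : ℂ) :=
  funext fun t => ((hasDerivAt_G hc t).ofReal_comp).deriv

lemma iteratedDeriv_two_F (hc : 0 < c) :
    iteratedDeriv 2 (F c) = fun t => (G2 c t : ℂ) := by
  rw [iteratedDeriv_succ, iteratedDeriv_one, deriv_F hc]
  exact funext fun t => ((hasDerivAt_G1 hc t).ofReal_comp).deriv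

lemma integrable_iteratedDeriv_F (hc : 0 < c) :
    ∀ n : ℕ, (n:ℕ∞) ≤ 2 → Integrable (iteratedDeriv n (F c)) := by
  intro n hn
  have hn' : n ≤ 2 := by exact_mod_cast hn
  interval_cases n
  · rw [iteratedDeriv_zero]
    exact Complex.ofRealCLM.integrable_comp (integrable_G hc)
  · rw [iteratedDeriv_one, deriv_F hc]
    exact Complex.ofRealCLM.integrable_comp (integrable_G1 hc)
  · rw [iteratedDeriv_two_F hc]
    exact Complex.ofRealCLM.integrable_comp (integrable_G2 hc)

lemma FT_norm_summable_gen {F : ℝ → ℂ} (hC : ContDiff ℝ 2 F)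
    (hI : ∀ n : ℕ, (n:ℕ∞) ≤ 2 → Integrable (iteratedDeriv n F)) :
    Summable fun j : ℤ => ‖𝓕 F j‖ := by
  have key := Real.fourier_iteratedDeriv (N := 2) (n := 2) hC hI (by norm_num)
  set B := ∫ t : ℝ, ‖iteratedDeriv 2 F t‖ with hB
  have bound : ∀ j : ℤ, j ≠ 0 → ‖𝓕 F j‖ ≤ (B/(4*π^2)) * |(j:ℝ)| ^ (-2:ℝ) := by
    intro j hj
    have hj' : (0:ℝ) < |(j:ℝ)| := by
      simpa using abs_pos.mpr (Int.cast_ne_zero.mpr hj : ((j:ℝ) ≠ 0))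
    have h1 : ‖𝓕 (iteratedDeriv 2 F) (j:ℝ)‖ ≤ B :=
      by
        rw [Real.fourier_real_eq]
        refine (norm_integral_le_integral_norm _).trans ?_
        simp_rw [Circle.norm_smul]
        exact le_rfl
    rw [key] at h1
    have h2 : ‖(2 * ↑π * Complex.I * (j:ℝ)) ^ 2 • 𝓕 F (j:ℝ)‖
        = (2*π*|(j:ℝ)|)^2 * ‖𝓕 F (j:ℝ)‖ := by
      rw [norm_smul, norm_pow]
      congr 2
      simp [abs_of_nonneg Real.pi_pos.le]
    rw [h2] at h1
    have h3 : |(j:ℝ)| ^ (-2:ℝ) = (|(j:ℝ)|^2)⁻¹ := by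
      rw [Real.rpow_neg (abs_nonneg _), Real.rpow_two]
    rw [mul_pow] at h1
    have h4 : (0:ℝ) < (2*π)^2 * |(j:ℝ)|^2 := by positivity
    have h5 : (B/(4*π^2)) * |(j:ℝ)| ^ (-2:ℝ) = B / ((2*π)^2 * |(j:ℝ)|^2) := by
      rw [h3]
      rw [div_mul_eq_div_div_swap, mul_pow, div_div]
      norm_num
      ring_nf
    rw [h5, le_div_iff₀ h4, mul_comm ((2*π)^2) (|(j:ℝ)|^2)] at *
    nlinarith [h1]
  refine Summable.of_norm_bounded_eventually
    (g := fun j : ℤ => (B/(4*π^2)) * |(j:ℝ)| ^ (-2:ℝ))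
    ((Real.summable_abs_int_rpow one_lt_two).mul_left _) ?_
  filter_upwards [eventually_cofinite_ne (0:ℤ)] with j hj
  rw [norm_norm]
  exact bound j hj

lemma denom_eq (t : ℝ) :
    ((t:ℂ)^2 + 1) ^ ((3:ℂ)/2) = (((t^2+1 : ℝ) ^ ((3:ℝ)/2) : ℝ) : ℂ) := by
  have h1 : ((t:ℂ)^2 + 1) = ((t^2+1 : ℝ) : ℂ) := by push_cast; ring
  rw [h1, show ((3:ℂ)/2) = (((3:ℝ)/2 : ℝ) : ℂ) by norm_num,
    Complex.ofReal_cpow (by positivity)]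

lemma auxI_eq (x : ℝ) :
    auxI x = ∫ t : ℝ, Complex.exp (Complex.I * (x:ℂ) * (t:ℂ)) * ((G 1 t : ℝ) : ℂ) := by
  unfold auxI
  congr 1
  funext t
  rw [denom_eq t, div_eq_mul_inv, ← Complex.ofReal_inv]
  congr 2
  rw [G, ← Real.rpow_neg (by positivity)]
  norm_num

lemma auxI_neg (x : ℝ) : auxI (-x) = auxI x := by
  unfold auxI
  rw [← integral_neg_eq_self
    (fun t : ℝ => Complex.exp (Complex.I * (x:ℂ) * (t:ℂ)) / ((t:ℂ)^2 + 1) ^ ((3:ℂ)/2)) volume]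
  congr 1
  funext t
  have h1 : Complex.I * ((-x : ℝ):ℂ) * (t:ℂ) = Complex.I * (x:ℂ) * ((-t : ℝ):ℂ) := by
    push_cast; ring
  have h2 : (((-t : ℝ)):ℂ)^2 + 1 = ((t:ℝ):ℂ)^2 + 1 := by push_cast; ring
  rw [h1, h2]

lemma auxI_conj (x : ℝ) : (starRingEnd ℂ) (auxI x) = auxI (-x) := by
  unfold auxI
  rw [← integral_conj]
  congr 1
  funext t
  rw [denom_eq t, map_div₀, Complex.conj_ofReal, ← Complex.exp_conj]
  congr 2
  simp only [map_mul, Complex.conj_I, Complex.conj_ofReal]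
  push_cast; ring

lemma auxI_real (x : ℝ) : auxI x = ((auxI x).re : ℂ) := by
  have h := auxI_conj x
  rw [auxI_neg] at h
  exact (Complex.conj_eq_iff_re.mp h).symm

lemma auxI_K1 {x : ℝ} (hx : x ≠ 0) : auxI x = ((2*x*K1 x : ℝ) : ℂ) := by
  rw [auxI_real]
  congr 1
  rw [K1_eq]
  field_simp

noncomputable def Phi (c : ℝ) (t : ℝ) : ℝ := t * (t^2+c) ^ (-(1:ℝ)/2) / c

lemma hasDerivAt_Phi (hc : 0 < c) (t : ℝ) : HasDerivAt (Phi c) (G c t) t := by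
  have h := (hasDerivAt_id t).mul
    ((hasDerivAt_base (c := c) t).rpow_const (p := -(1:ℝ)/2) (Or.inl (base_pos hc t).ne'))
  have h2 := h.div_const c
  convert h2 using 1
  · rfl
  · rfl
  · rfl
  have key : (t^2+c) ^ (-(1:ℝ)/2) = (t^2+c) * (t^2+c) ^ (-(3:ℝ)/2) := by
    rw [show (-(1:ℝ)/2) = 1 + -(3:ℝ)/2 by norm_num, Real.rpow_add (base_pos hc t),
      Real.rpow_one]
  rw [show (-(1:ℝ)/2 - 1) = -(3:ℝ)/2 by norm_num]
  rw [G]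
  field_simp
  simp only [neg_div] at key
  rw [key, id]
  ring

lemma tendsto_Phi (hc : 0 < c) : Tendsto (Phi c) atTop (𝓝 (1/c)) := by
  have key : Tendsto (fun t : ℝ => t * (t^2+c) ^ (-(1:ℝ)/2)) atTop (𝓝 1) := by
    have h1 : Tendsto (fun t : ℝ => 1 + c/t^2) atTop (𝓝 1) := by
      have := Tendsto.div_atTop (tendsto_const_nhds (x := c))
        (tendsto_pow_atTop (two_ne_zero) : Tendsto (fun t:ℝ => t^2) atTop atTop)
      simpa using tendsto_const_nhds.add this
    have h2 : ContinuousAt (fun u : ℝ => u ^ (-(1:ℝ)/2)) 1 :=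
      Real.continuousAt_rpow_const 1 _ (Or.inl one_ne_zero)
    have h3 := h2.tendsto.comp h1
    rw [Real.one_rpow] at h3
    refine h3.congr' ?_
    filter_upwards [eventually_gt_atTop (0:ℝ)] with t ht
    have ht2 : (0:ℝ) < t^2 := by positivity
    have : t^2 + c = t^2 * (1 + c/t^2) := by field_simp
    simp only [Function.comp]
    rw [this, Real.mul_rpow ht2.le (by positivity), ← Real.rpow_natCast t 2,
      ← Real.rpow_mul ht.le]
    rw [show ((2:ℕ):ℝ) * (-(1:ℝ)/2) = -1 by norm_num, Real.rpow_neg_one]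
    field_simp
  unfold Phi
  exact key.div_const c

lemma integral_G_Ioi (hc : 0 < c) : ∫ t in Ioi (0:ℝ), G c t = 1/c := by
  have h := integral_Ioi_of_hasDerivAt_of_tendsto' (a := 0)
    (fun x _ => hasDerivAt_Phi hc x) ((integrable_G hc).integrableOn) (tendsto_Phi hc)
  rw [h, Phi]
  simp

lemma integral_G_total (hc : 0 < c) : ∫ t : ℝ, G c t = 2/c := by
  have heven : ∫ t in Iic (0:ℝ), G c t = ∫ t in Ioi (0:ℝ), G c t := by
    have h := integral_comp_neg_Iic (0:ℝ) (G c)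
    rw [neg_zero] at h
    rw [← h]
    simp only [G, neg_sq]
  rw [← intervalIntegral.integral_Iic_add_Ioi (b := (0:ℝ)) (integrable_G hc).integrableOn
    (integrable_G hc).integrableOn, heven, integral_G_Ioi hc]
  ring

lemma G_scale {N : ℝ} (hN : 0 < N) (s : ℝ) :
    G (N^2) (N*s) = N ^ (-3:ℝ) * G 1 s := by
  unfold G
  rw [show (N*s)^2 + N^2 = N^2 * (s^2+1) by ring,
    Real.mul_rpow (by positivity) (by positivity)]
  congr 1
  rw [← Real.rpow_natCast N 2, ← Real.rpow_mul hN.le]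
  norm_num

lemma FT_F {N : ℝ} (hN : 0 < N) (ξ : ℝ) :
    𝓕 (F (N^2)) ξ = ((1 / N^2 : ℝ) : ℂ) * auxI (2*π*ξ*N) := by
  rw [Real.fourier_real_eq_integral_exp_smul]
  set Φ : ℝ → ℂ := fun v =>
    Complex.exp (((-2*π*v*ξ : ℝ) : ℂ) * Complex.I) * ((G (N^2) v : ℝ) : ℂ) with hΦ
  have h0 : (∫ v : ℝ, Complex.exp (((-2*π*v*ξ : ℝ):ℂ) * Complex.I) • F (N^2) v)
      = ∫ v, Φ v := by
    simp only [hΦ, F, smul_eq_mul]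
  rw [h0]
  have hscale : ∫ v, Φ v = (N:ℂ) * ∫ s, Φ (N*s) := by
    rw [MeasureTheory.Measure.integral_comp_mul_left Φ N, abs_inv, abs_of_pos hN,
      ← Complex.real_smul, smul_smul]
    rw [mul_inv_cancel₀ hN.ne', one_smul]
  have hΦN : ∀ s : ℝ, Φ (N*s)
      = ((N ^ (-3:ℝ) : ℝ) : ℂ) *
        (Complex.exp (Complex.I * ((-(2*π*ξ*N) : ℝ) : ℂ) * (s:ℂ)) * ((G 1 s : ℝ) : ℂ)) := by
    intro s
    rw [hΦ]
    simp only
    rw [G_scale hN s]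
    have harg : ((-2*π*(N*s)*ξ : ℝ) : ℂ) * Complex.I
        = Complex.I * ((-(2*π*ξ*N) : ℝ) : ℂ) * (s:ℂ) := by push_cast; ring
    rw [harg]
    push_cast
    ring
  rw [hscale]
  have hint : ∫ s : ℝ, Φ (N*s)
      = ((N ^ (-3:ℝ) : ℝ) : ℂ) * ∫ s : ℝ,
          Complex.exp (Complex.I * ((-(2*π*ξ*N) : ℝ):ℂ) * (s:ℂ)) * ((G 1 s : ℝ) : ℂ) := by
    rw [← MeasureTheory.integral_const_mul]
    exact integral_congr_ae (Filter.Eventually.of_forall fun s => hΦN s)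
  rw [hint, ← auxI_eq, auxI_neg, ← mul_assoc]
  congr 1
  rw [show (-3:ℝ) = -((3:ℕ):ℝ) by norm_num, Real.rpow_neg hN.le, Real.rpow_natCast]
  push_cast
  have hNC : (N:ℂ) ≠ 0 := by exact_mod_cast hN.ne'
  field_simp

lemma auxI_zero : auxI 0 = 2 := by
  rw [auxI_eq]
  simp only [Complex.ofReal_zero, mul_zero, zero_mul, Complex.exp_zero, one_mul]
  have h2 : ∫ t : ℝ, G 1 t = (2:ℝ) := by rw [integral_G_total one_pos]; norm_num
  calc (∫ t : ℝ, ((G 1 t : ℝ) : ℂ)) = ((∫ t : ℝ, G 1 t : ℝ) : ℂ) := integral_ofReal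
    _ = 2 := by rw [h2]; norm_num

lemma FT_even {N : ℝ} (hN : 0 < N) (ξ : ℝ) :
    𝓕 (F (N^2)) (-ξ) = 𝓕 (F (N^2)) ξ := by
  rw [FT_F hN, FT_F hN]
  congr 1
  rw [show 2*π*(-ξ)*N = -(2*π*ξ*N) by ring, auxI_neg]

lemma FT_zero {N : ℝ} (hN : 0 < N) :
    𝓕 (F (N^2)) 0 = ((2/N^2 : ℝ) : ℂ) := by
  rw [FT_F hN, show 2*π*(0:ℝ)*N = 0 by ring, auxI_zero]
  push_cast
  ring

lemma G_le_abs_rpow (hc : 0 < c) {x : ℝ} (hx : x ≠ 0) : G c x ≤ |x| ^ (-3:ℝ) := by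
  have hx2 : (0:ℝ) < x^2 := by positivity
  have h1 : G c x ≤ (x^2) ^ (-(3:ℝ)/2) := by
    rw [G]
    exact Real.rpow_le_rpow_of_nonpos hx2 (by nlinarith) (by norm_num)
  have h2 : (x^2) ^ (-(3:ℝ)/2) = |x| ^ (-3:ℝ) := by
    rw [← sq_abs, ← Real.rpow_natCast |x| 2, ← Real.rpow_mul (abs_nonneg x)]
    norm_num
  rw [← h2]
  exact h1

lemma bigO_F (hc : 0 < c) : (F c) =O[cocompact ℝ] (fun x => |x| ^ (-3:ℝ)) := by
  refine IsBigO.of_bound 1 ?_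
  have hev : ∀ᶠ x : ℝ in cocompact ℝ, 1 ≤ |x| := by
    rw [cocompact_eq_atBot_atTop, Filter.eventually_sup]
    constructor
    · filter_upwards [eventually_le_atBot (-1:ℝ)] with x hx
      rw [abs_of_nonpos (by linarith)]; linarith
    · filter_upwards [eventually_ge_atTop (1:ℝ)] with x hx
      rw [abs_of_nonneg (by linarith)]; linarith
  filter_upwards [hev] with x hx
  have hx0 : x ≠ 0 := by intro h; rw [h] at hx; simp at hx; linarith
  have h1 : ‖F c x‖ = G c x := by
    rw [F, Complex.norm_real, Real.norm_eq_abs, abs_of_nonneg (G_nonneg hc x)]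
  rw [h1, one_mul, Real.norm_eq_abs, abs_of_nonneg (Real.rpow_nonneg (abs_nonneg x) _)]
  exact G_le_abs_rpow hc hx0

lemma summable_G (hc : 0 < c) : Summable fun m : ℤ => G c m := by
  refine summable_of_isBigO (Real.summable_abs_int_rpow (by norm_num : (1:ℝ) < 3)) ?_
  refine IsBigO.of_bound 1 ?_
  filter_upwards [eventually_cofinite_ne (0:ℤ)] with m hm
  have hm' : ((m:ℝ)) ≠ 0 := Int.cast_ne_zero.mpr hm
  rw [one_mul, Real.norm_eq_abs, Real.norm_eq_abs, abs_of_nonneg (G_nonneg hc _),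
    abs_of_nonneg (Real.rpow_nonneg (abs_nonneg _) _)]
  exact G_le_abs_rpow hc hm'

end PoissonAux

end PoissonAuxSection

/-- Poisson summation:
`Σ_{m ∈ ℤ} (m²+n²)^{−3/2} = 2/n² + (8π/n) Σ_{j≥1} j K₁(2πjn)`, both sides
converging absolutely. -/
theorem poisson_summation_dipolar :
    ∀ n : ℕ, 1 ≤ n →
    Summable (fun m : ℤ => 1 / (((m:ℝ)^2 + (n:ℝ)^2) ^ ((3:ℝ)/2))) ∧
    Summable (fun j : ℕ+ => (j:ℝ) * K1 (2 * Real.pi * j * n)) ∧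
    ∑' m : ℤ, 1 / (((m:ℝ)^2 + (n:ℝ)^2) ^ ((3:ℝ)/2))
      = 2 / (n:ℝ)^2 + (8 * Real.pi / n) * ∑' j : ℕ+, (j:ℝ) * K1 (2 * Real.pi * j * n) := by
  intro n hn
  have hN : (0:ℝ) < (n:ℝ) := by exact_mod_cast Nat.lt_of_lt_of_le Nat.zero_lt_one hn
  have hc : (0:ℝ) < (n:ℝ)^2 := by positivity
  have hπ : Real.pi ≠ 0 := Real.pi_ne_zero
  -- identification of summands
  have hG : ∀ m : ℤ, PoissonAux.G ((n:ℝ)^2) (m:ℝ) = 1 / (((m:ℝ)^2 + (n:ℝ)^2) ^ ((3:ℝ)/2)) := by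
    intro m
    rw [PoissonAux.G, one_div, ← Real.rpow_neg (by positivity), neg_div]
  have hsumG : Summable (fun m : ℤ => PoissonAux.G ((n:ℝ)^2) (m:ℝ)) := PoissonAux.summable_G hc
  -- Fourier side summability
  have hFs := PoissonAux.FT_norm_summable_gen (PoissonAux.contDiff_F hc)
    (PoissonAux.integrable_iteratedDeriv_F hc)
  have hFsum : Summable (fun j : ℤ => FourierTransform.fourier (PoissonAux.F ((n:ℝ)^2)) (j:ℝ)) :=
    hFs.of_norm
  set A : ℤ → ℂ := fun j => FourierTransform.fourier (PoissonAux.F ((n:ℝ)^2)) (j:ℝ) with hA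
  -- values of the Fourier transform at positive integers
  have hval : ∀ j : ℕ+, A (j:ℤ)
      = (((4*Real.pi*(j:ℝ)/(n:ℝ)) * K1 (2*Real.pi*(j:ℝ)*(n:ℝ)) : ℝ) : ℂ) := by
    intro j
    have hj : (0:ℝ) < (j:ℝ) := by exact_mod_cast j.pos
    have hx : (0:ℝ) < 2*Real.pi*(j:ℝ)*(n:ℝ) := by positivity
    have h1 : ((j:ℤ):ℝ) = (j:ℝ) := by push_cast; rfl
    rw [hA]
    simp only
    rw [h1, PoissonAux.FT_F hN (j:ℝ), PoissonAux.auxI_K1 hx.ne', ← Complex.ofReal_mul]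
    congr 1
    field_simp
    ring
  -- Poisson summation
  have poisson := Real.tsum_eq_tsum_fourier_of_rpow_decay_of_summable
    (PoissonAux.contDiff_F hc).continuous (b := 3) (by norm_num)
    (PoissonAux.bigO_F hc) hFsum 0
  simp only [zero_add, QuotientAddGroup.mk_zero, fourier_eval_zero, mul_one] at poisson
  -- splitting of the two-sided sum
  have hA1 : Summable fun k : ℕ => A (k:ℤ) :=
    hFsum.comp_injective (fun a b h => by exact_mod_cast h)
  have hA2 : Summable fun k : ℕ => A (-((k:ℤ)+1)) :=
    hFsum.comp_injective (i := fun k : ℕ => -((k:ℤ)+1)) (fun a b h => by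
      have h' : -((a:ℤ)+1) = -((b:ℤ)+1) := h
      omega)
  have heven : ∀ m : ℤ, A (-m) = A m := by
    intro m
    rw [hA]
    simp only
    rw [show ((-m:ℤ):ℝ) = -((m:ℤ):ℝ) by push_cast; ring, PoissonAux.FT_even hN]
  have hsplit := tsum_of_nat_of_neg_add_one hA1 hA2
  have h2' : ∑' k : ℕ, A (-((k:ℤ)+1)) = ∑' k : ℕ, A ((k:ℤ)+1) :=
    tsum_congr fun k => heven ((k:ℤ)+1)
  have hzero : ∑' k : ℕ, A (k:ℤ) = A 0 + ∑' k : ℕ, A ((k+1 : ℕ):ℤ) := hA1.tsum_eq_zero_add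
  have hpnat : ∑' k : ℕ, A ((k+1 : ℕ):ℤ) = ∑' j : ℕ+, A ((j:ℕ):ℤ) := by
    rw [← Equiv.pnatEquivNat.symm.tsum_eq (fun j : ℕ+ => A ((j:ℕ):ℤ))]
    exact tsum_congr fun k => rfl
  -- summability of the K1 series
  have hrsum : Summable fun j : ℕ+ => (A (j:ℤ)).re := by
    have h0 : Summable fun j : ℕ+ => A ((j:ℕ):ℤ) :=
      hFsum.comp_injective (i := fun j : ℕ+ => ((j:ℕ):ℤ)) (fun a b h => by
        have h' : ((a:ℕ):ℤ) = ((b:ℕ):ℤ) := h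
        exact PNat.coe_injective (by exact_mod_cast h'))
    exact Complex.reCLM.summable h0
  have hRsum : Summable (fun j : ℕ+ => (j:ℝ) * K1 (2 * Real.pi * j * n)) := by
    refine (hrsum.mul_left ((n:ℝ)/(4*Real.pi))).congr fun j => ?_
    have hj : (0:ℝ) < (j:ℝ) := by exact_mod_cast j.pos
    rw [hval j, Complex.ofReal_re]
    field_simp
  refine ⟨hsumG.congr hG, hRsum, ?_⟩
  -- evaluate the two-sided Fourier sum
  have hA0 : A 0 = ((2/(n:ℝ)^2 : ℝ) : ℂ) := by
    rw [hA]
    simp only [Int.cast_zero]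
    exact PoissonAux.FT_zero hN
  have hsum_pnat : ∑' j : ℕ+, A ((j:ℕ):ℤ)
      = (((4*Real.pi/(n:ℝ)) * ∑' j : ℕ+, (j:ℝ) * K1 (2 * Real.pi * j * n) : ℝ) : ℂ) := by
    have step1 : ∑' j : ℕ+, A ((j:ℕ):ℤ)
        = ∑' j : ℕ+, (((4*Real.pi/(n:ℝ)) * ((j:ℝ) * K1 (2*Real.pi*(j:ℝ)*(n:ℝ))) : ℝ) : ℂ) := by
      refine tsum_congr fun j => ?_
      rw [show ((j:ℕ):ℤ) = (j:ℤ) from rfl, hval j]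
      congr 1
      field_simp
    rw [step1, ← Complex.ofReal_tsum, tsum_mul_left]
  -- put everything together over ℂ
  have hmain : ((∑' m : ℤ, PoissonAux.G ((n:ℝ)^2) (m:ℝ) : ℝ) : ℂ)
      = ((2/(n:ℝ)^2 + (8*Real.pi/(n:ℝ)) * ∑' j : ℕ+, (j:ℝ) * K1 (2 * Real.pi * j * n) : ℝ) : ℂ) := by
    rw [Complex.ofReal_tsum]
    calc ∑' m : ℤ, ((PoissonAux.G ((n:ℝ)^2) (m:ℝ) : ℝ) : ℂ)
        = ∑' j : ℤ, A j := poisson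
      _ = (∑' k : ℕ, A (k:ℤ)) + ∑' k : ℕ, A (-((k:ℤ)+1)) := hsplit
      _ = (A 0 + ∑' k : ℕ, A ((k+1 : ℕ):ℤ)) + ∑' k : ℕ, A ((k:ℤ)+1) := by rw [hzero, h2']
      _ = A 0 + (∑' k : ℕ, A ((k+1 : ℕ):ℤ) + ∑' k : ℕ, A ((k+1 : ℕ):ℤ)) := by
          push_cast
          ring
      _ = ((2/(n:ℝ)^2 : ℝ) : ℂ)
          + ((((4*Real.pi/(n:ℝ)) * ∑' j : ℕ+, (j:ℝ) * K1 (2 * Real.pi * j * n) : ℝ) : ℂ)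
            + (((4*Real.pi/(n:ℝ)) * ∑' j : ℕ+, (j:ℝ) * K1 (2 * Real.pi * j * n) : ℝ) : ℂ)) := by
          rw [hA0, hpnat, hsum_pnat]
      _ = _ := by
          push_cast
          ring
  have hfin := Complex.ofReal_injective hmain
  calc ∑' m : ℤ, 1 / (((m:ℝ)^2 + (n:ℝ)^2) ^ ((3:ℝ)/2))
      = ∑' m : ℤ, PoissonAux.G ((n:ℝ)^2) (m:ℝ) := tsum_congr fun m => (hG m).symm
    _ = _ := hfin
end

section
/- There exist constants C > 0 and h₀ ∈ ℕ such that for every even integer h ≥ h₀, Σ_{n₁ ∈ ℤ} Σ_{n₂ = h/2 + 1}^{3h/2} min{n₂ − h/2, 3h/2 − n₂}/(n₁² + n₂²)^{3/2} ≤ 2·log(4/3) + C/h. -/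
open scoped BigOperators
open MeasureTheory

section TileAux

private lemma log_quad {y : ℝ} (h0 : 0 ≤ y) (h1 : y ≤ 1) : y - y^2/2 ≤ Real.log (1+y) := by
  have h2 : Real.exp (y - y^2/2) ≤ 1 + y := by
    have hb : Real.exp y ≤ 1 + y + y^2/2 + y^3/2 := by
      have h3 := Real.exp_bound' h0 h1 (n := 3) (by norm_num)
      have h4 : (∑ m ∈ Finset.range 3, y^m/(m.factorial:ℝ)) = 1 + y + y^2/2 := by
        norm_num [Finset.sum_range_succ]
      rw [h4] at h3; norm_num [Nat.factorial] at h3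
      nlinarith [pow_nonneg h0 3]
    have he : 1 + y^2/2 ≤ Real.exp (y^2/2) := by linarith [Real.add_one_le_exp (y^2/2)]
    have hpos : (0:ℝ) < 1 + y^2/2 := by positivity
    have hmul : Real.exp (y - y^2/2) * (1 + y^2/2) ≤ (1+y) * (1 + y^2/2) := by
      calc Real.exp (y - y^2/2) * (1 + y^2/2)
          ≤ Real.exp (y - y^2/2) * Real.exp (y^2/2) :=
            mul_le_mul_of_nonneg_left he (Real.exp_nonneg _)
        _ = Real.exp y := by rw [← Real.exp_add]; ring_nf
        _ ≤ (1+y)*(1+y^2/2) := by nlinarith [hb]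
    exact le_of_mul_le_mul_right hmul hpos
  exact (Real.le_log_iff_exp_le (by linarith : (0:ℝ) < 1 + y)).mpr h2

private lemma stepUpR (Hr x : ℝ) (hH : 1 ≤ Hr) (h1 : Hr + 1 ≤ x) (h2 : x ≤ 2*Hr - 1) :
    (x - Hr)/x^2 ≤ (Real.log (x+1) + Hr/(x+1)) - (Real.log x + Hr/x) := by
  have hx : (2:ℝ) ≤ x := by linarith
  have hx0 : (0:ℝ) < x := by linarith
  have hlog : Real.log (x+1) - Real.log x = Real.log (1+1/x) := by
    rw [show (1:ℝ)+1/x = (x+1)/x by field_simp, Real.log_div (by linarith) (ne_of_gt hx0)]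
  have hq := log_quad (y := 1/x) (by positivity) (by rw [div_le_one hx0]; linarith)
  have e1 : (1/x)^2 = 1/x^2 := by rw [div_pow]; norm_num
  rw [e1] at hq
  have e2 : (1/x - 1/x^2/2) + (Hr/(x+1) - Hr/x) - (x - Hr)/x^2
      = (2*Hr - x - 1)/(2*x^2*(x+1)) := by field_simp; ring
  have e3 : (0:ℝ) ≤ (2*Hr - x - 1)/(2*x^2*(x+1)) :=
    div_nonneg (by linarith) (by positivity)
  linarith

private lemma stepDownR (Hr x : ℝ) (hH : 1 ≤ Hr) (h1 : 2*Hr + 1 ≤ x) (h2 : x ≤ 3*Hr) :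
    (3*Hr - x)/x^2 ≤ (-(3*Hr)/x - Real.log x) - (-(3*Hr)/(x-1) - Real.log (x-1)) := by
  have hx0 : (0:ℝ) < x := by linarith
  have hx1 : (0:ℝ) < x - 1 := by linarith
  have hlog : Real.log x - Real.log (x-1) = Real.log (1 + 1/(x-1)) := by
    rw [show (1:ℝ)+1/(x-1) = x/(x-1) by field_simp; ring, Real.log_div (ne_of_gt hx0) (ne_of_gt hx1)]
  have hub : Real.log (1+1/(x-1)) ≤ 1/(x-1) := by
    have := Real.log_le_sub_one_of_pos (show (0:ℝ) < 1+1/(x-1) by positivity)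
    linarith
  have e2 : (-(3*Hr)/x - Real.log x) - (-(3*Hr)/(x-1) - Real.log (x-1))
      = 3*Hr/(x*(x-1)) - (Real.log x - Real.log (x-1)) := by field_simp; ring
  have e3 : 3*Hr/(x*(x-1)) - 1/(x-1) - (3*Hr - x)/x^2 = (3*Hr - x)/(x^2*(x-1)) := by
    field_simp; ring
  have e4 : (0:ℝ) ≤ (3*Hr - x)/(x^2*(x-1)) := div_nonneg (by linarith) (by positivity)
  linarith

private lemma sum_Icc_le_tele (f : ℕ → ℝ) (G : ℕ → ℝ) (a b : ℕ) (hab : a ≤ b+1)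
    (h : ∀ n, a ≤ n → n ≤ b → f n ≤ G (n+1) - G n) :
    ∑ n ∈ Finset.Icc a b, f n ≤ G (b+1) - G a := by
  rw [← Finset.Ico_add_one_right_eq_Icc, Finset.sum_Ico_eq_sum_range]
  calc ∑ i ∈ Finset.range (b+1-a), f (a+i)
      ≤ ∑ i ∈ Finset.range (b+1-a), (G (a+i+1) - G (a+i)) := by
        apply Finset.sum_le_sum; intro i hi
        have := Finset.mem_range.mp hi
        exact h (a+i) (Nat.le_add_right a i) (by omega)
    _ = G (a+(b+1-a)) - G (a+0) := Finset.sum_range_sub (fun j => G (a+j)) (b+1-a)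
    _ = G (b+1) - G a := by rw [show a+(b+1-a) = b+1 from by omega]; norm_num

private lemma key1 (a m : ℝ) (ha : 0 ≤ a) (hm : 1 ≤ m) :
    1 / (((a+1)^2+m^2) ^ ((3:ℝ)/2))
      ≤ (a+1)/(m^2*Real.sqrt ((a+1)^2+m^2)) - a/(m^2*Real.sqrt (a^2+m^2)) := by
  have hm0 : (0:ℝ) < m := lt_of_lt_of_le one_pos hm
  set u := Real.sqrt (a^2+m^2) with hu
  set v := Real.sqrt ((a+1)^2+m^2) with hv
  have hX : (0:ℝ) < (a+1)^2+m^2 := by positivity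
  have hu0 : 0 < u := Real.sqrt_pos.mpr (by positivity)
  have hv0 : 0 < v := Real.sqrt_pos.mpr hX
  have hu2 : u^2 = a^2+m^2 := Real.sq_sqrt (by positivity)
  have hv2 : v^2 = (a+1)^2+m^2 := Real.sq_sqrt (le_of_lt hX)
  have hpow : ((a+1)^2+m^2) ^ ((3:ℝ)/2) = v^2*v := by
    rw [hv2, show ((3:ℝ)/2) = 1 + 1/2 by norm_num, Real.rpow_add hX, Real.rpow_one,
      ← Real.sqrt_eq_rpow]
  rw [hpow]
  have hpoly : a^2 * ((a+1)^2+m^2)^3 ≤ (a^2+m^2) * ((a+1)^3 + a*m^2)^2 := by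
    nlinarith [sq_nonneg m, mul_nonneg ha (sq_nonneg m), mul_nonneg (mul_nonneg ha ha) (sq_nonneg m),
      mul_nonneg (mul_nonneg (mul_nonneg ha ha) ha) (sq_nonneg m),
      mul_nonneg (mul_nonneg (mul_nonneg (mul_nonneg ha ha) ha) ha) (sq_nonneg m),
      mul_nonneg ha (sq_nonneg (m*m)), mul_nonneg (mul_nonneg ha ha) (sq_nonneg (m*m))]
  have hkey : a * v^3 ≤ u * ((a+1)^3 + a*m^2) := by
    have h1 : (a*v^3)^2 ≤ (u * ((a+1)^3 + a*m^2))^2 := by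
      calc (a*v^3)^2 = a^2*(v^2)^3 := by ring
        _ = a^2*((a+1)^2+m^2)^3 := by rw [hv2]
        _ ≤ (a^2+m^2)*((a+1)^3+a*m^2)^2 := hpoly
        _ = (u*((a+1)^3+a*m^2))^2 := by rw [mul_pow, hu2]
    have h2 : 0 ≤ u * ((a+1)^3 + a*m^2) := by positivity
    calc a * v^3 = Real.sqrt ((a*v^3)^2) := (Real.sqrt_sq (by positivity)).symm
      _ ≤ Real.sqrt ((u * ((a+1)^3 + a*m^2))^2) := Real.sqrt_le_sqrt h1
      _ = u * ((a+1)^3 + a*m^2) := Real.sqrt_sq h2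
  have e : (a+1)/(m^2*v) - a/(m^2*u) - 1/(v^2*v)
      = (u*((a+1)*v^2 - m^2) - a*v^2*v) / (m^2*u*(v^2*v)) := by
    field_simp; ring
  have hnum : 0 ≤ u*((a+1)*v^2 - m^2) - a*v^2*v := by
    have h5 : a*v^2*v = a*v^3 := by ring
    have h6 : u*((a+1)*v^2 - m^2) = u*((a+1)^3+a*m^2) := by rw [hv2]; ring
    rw [h5, h6]; linarith
  have e2 : (0:ℝ) ≤ (u*((a+1)*v^2 - m^2) - a*v^2*v) / (m^2*u*(v^2*v)) :=
    div_nonneg hnum (by positivity)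
  linarith

private lemma zsum (m : ℝ) (hm : 1 ≤ m) :
    Summable (fun n : ℤ => 1/(((n:ℝ)^2+m^2) ^ ((3:ℝ)/2))) ∧
    ∑' n : ℤ, 1/(((n:ℝ)^2+m^2) ^ ((3:ℝ)/2)) ≤ 2/m^2 + 1/m^3 := by
  have hm0 : (0:ℝ) < m := lt_of_lt_of_le one_pos hm
  set φ : ℕ → ℝ := fun k => 1/(((k:ℝ)^2+m^2) ^ ((3:ℝ)/2)) with hφ
  set F : ℕ → ℝ := fun k => (k:ℝ)/(m^2 * Real.sqrt ((k:ℝ)^2+m^2)) with hF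
  have hφ0 : ∀ k, 0 ≤ φ k := fun k => by simp only [hφ]; positivity
  have hFle : ∀ N : ℕ, F N ≤ 1/m^2 := by
    intro N
    have h1 : (N:ℝ) ≤ Real.sqrt ((N:ℝ)^2+m^2) := by
      calc (N:ℝ) = Real.sqrt ((N:ℝ)^2) := (Real.sqrt_sq (by positivity)).symm
        _ ≤ _ := Real.sqrt_le_sqrt (by nlinarith)
    have h2 : (0:ℝ) < Real.sqrt ((N:ℝ)^2+m^2) := Real.sqrt_pos.mpr (by positivity)
    simp only [hF]
    rw [div_le_div_iff₀ (by positivity) (by positivity)]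
    nlinarith [sq_nonneg m]
  have hpart : ∀ N : ℕ, ∑ i ∈ Finset.range N, φ (i+1) ≤ 1/m^2 := by
    intro N
    calc ∑ i ∈ Finset.range N, φ (i+1)
        ≤ ∑ i ∈ Finset.range N, (F (i+1) - F i) := by
          apply Finset.sum_le_sum
          intro i _
          have := key1 (i:ℝ) m (by positivity) hm
          simpa [hφ, hF] using this
      _ = F N - F 0 := Finset.sum_range_sub F N
      _ ≤ 1/m^2 := by
          have : F 0 = 0 := by simp [hF]
          rw [this, sub_zero]; exact hFle N
  have hs1 : Summable (fun k => φ (k+1)) :=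
    summable_of_sum_range_le (fun k => hφ0 _) hpart
  have hsnat : Summable φ := (summable_nat_add_iff 1).mp hs1
  have hT : ∑' k : ℕ, φ (k+1) ≤ 1/m^2 := Summable.tsum_le_of_sum_range_le hs1 hpart
  have hgnat : ∀ n : ℕ, 1/((((n:ℤ)):ℝ)^2+m^2) ^ ((3:ℝ)/2) = φ n := by
    intro n; simp [hφ]
  have hgneg : ∀ n : ℕ, 1/((((-(n+1):ℤ)):ℝ)^2+m^2) ^ ((3:ℝ)/2) = φ (n+1) := by
    intro n; simp only [hφ]; norm_num; push_cast; ring_nf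
  have hsum : Summable (fun n : ℤ => 1/(((n:ℝ)^2+m^2) ^ ((3:ℝ)/2))) := by
    apply Summable.of_nat_of_neg_add_one
    · exact hsnat.congr (fun n => (hgnat n).symm)
    · exact hs1.congr (fun n => (hgneg n).symm)
  refine ⟨hsum, ?_⟩
  have hφ0v : φ 0 = 1/m^3 := by
    have h2 : (m^2) ^ ((3:ℝ)/2) = m^3 := by
      rw [← Real.rpow_natCast m 2, ← Real.rpow_mul hm0.le]
      norm_num
    simp [hφ, h2]
  calc ∑' n : ℤ, 1/(((n:ℝ)^2+m^2) ^ ((3:ℝ)/2))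
      = (∑' n : ℕ, φ n) + ∑' n : ℕ, φ (n+1) := by
        rw [tsum_of_nat_of_neg_add_one (hsnat.congr (fun n => (hgnat n).symm))
          (hs1.congr (fun n => (hgneg n).symm))]
        congr 1
        · exact tsum_congr hgneg
    _ = (φ 0 + ∑' n : ℕ, φ (n+1)) + ∑' n : ℕ, φ (n+1) := by rw [Summable.tsum_eq_zero_add hsnat]
    _ ≤ (1/m^3 + 1/m^2) + 1/m^2 := by rw [hφ0v]; linarith
    _ = 2/m^2 + 1/m^3 := by ring

private lemma sumN2 (H : ℕ) (hH : 1 ≤ H) :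
    ∑ n ∈ Finset.Icc (H+1) (3*H),
      (min ((n:ℝ) - (H:ℝ)) (3*(H:ℝ) - (n:ℝ)) * (2/(n:ℝ)^2 + 1/(n:ℝ)^3))
      ≤ 2*Real.log (4/3) + (9:ℝ)/(2*(H:ℝ)) := by
  set Hr := (H:ℝ) with hHrdef
  have hHr1 : (1:ℝ) ≤ Hr := by rw [hHrdef]; exact_mod_cast hH
  have hHr0 : (0:ℝ) < Hr := by linarith
  -- Step A: split the summand
  have stepA : ∀ n ∈ Finset.Icc (H+1) (3*H),
      min ((n:ℝ) - Hr) (3*Hr - (n:ℝ)) * (2/(n:ℝ)^2 + 1/(n:ℝ)^3)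
      = 2*(min ((n:ℝ) - Hr) (3*Hr - (n:ℝ))/(n:ℝ)^2)
        + min ((n:ℝ) - Hr) (3*Hr - (n:ℝ))/(n:ℝ)^3 := by
    intro n _; ring
  rw [Finset.sum_congr rfl stepA, Finset.sum_add_distrib, ← Finset.mul_sum]
  -- bounds on min
  have hmin_le : ∀ n ∈ Finset.Icc (H+1) (3*H), min ((n:ℝ) - Hr) (3*Hr - (n:ℝ)) ≤ Hr := by
    intro n hn
    obtain ⟨h1, h2⟩ := Finset.mem_Icc.mp hn
    rcases le_total n (2*H) with h3 | h3
    · refine le_trans (min_le_left _ _) ?_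
      have : (n:ℝ) ≤ 2*Hr := by rw [hHrdef]; exact_mod_cast h3
      linarith
    · refine le_trans (min_le_right _ _) ?_
      have : 2*Hr ≤ (n:ℝ) := by rw [hHrdef]; exact_mod_cast h3
      linarith
  -- S3 bound
  have hS3 : ∑ n ∈ Finset.Icc (H+1) (3*H), min ((n:ℝ) - Hr) (3*Hr - (n:ℝ))/(n:ℝ)^3
      ≤ 2/Hr := by
    have hterm : ∀ n ∈ Finset.Icc (H+1) (3*H),
        min ((n:ℝ) - Hr) (3*Hr - (n:ℝ))/(n:ℝ)^3 ≤ 1/Hr^2 := by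
      intro n hn
      obtain ⟨h1, h2⟩ := Finset.mem_Icc.mp hn
      have hn1 : Hr ≤ (n:ℝ) := by
        have : H ≤ n := by omega
        rw [hHrdef]; exact_mod_cast this
      calc min ((n:ℝ) - Hr) (3*Hr - (n:ℝ))/(n:ℝ)^3
          ≤ Hr/Hr^3 :=
            div_le_div₀ hHr0.le (hmin_le n hn) (by positivity)
              (pow_le_pow_left₀ hHr0.le hn1 3)
        _ = 1/Hr^2 := by field_simp
    calc ∑ n ∈ Finset.Icc (H+1) (3*H), min ((n:ℝ) - Hr) (3*Hr - (n:ℝ))/(n:ℝ)^3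
        ≤ (Finset.Icc (H+1) (3*H)).card • (1/Hr^2) := Finset.sum_le_card_nsmul _ _ _ hterm
      _ = ((2*H:ℕ):ℝ) * (1/Hr^2) := by
          rw [show (Finset.Icc (H+1) (3*H)).card = 2*H from by rw [Nat.card_Icc]; omega]
          simp [nsmul_eq_mul]
      _ = 2/Hr := by push_cast; field_simp; ring
  -- S2 bound
  have hS2 : ∑ n ∈ Finset.Icc (H+1) (3*H), min ((n:ℝ) - Hr) (3*Hr - (n:ℝ))/(n:ℝ)^2
      ≤ 2*Real.log 2 - Real.log 3 + 1/Hr + 1/(4*Hr) := by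
    have e2H : ((2*H:ℕ):ℝ) = 2*Hr := by rw [hHrdef]; push_cast; ring
    have hS2a : ∑ n ∈ Finset.Ioc H (2*H), min ((n:ℝ) - Hr) (3*Hr - (n:ℝ))/(n:ℝ)^2
        ≤ Real.log 2 - 1/2 + 1/Hr + 1/(4*Hr) := by
      have hcongr : ∀ n ∈ Finset.Ioc H (2*H),
          min ((n:ℝ) - Hr) (3*Hr - (n:ℝ))/(n:ℝ)^2 = ((n:ℝ) - Hr)/(n:ℝ)^2 := by
        intro n hn
        obtain ⟨h1, h2⟩ := Finset.mem_Ioc.mp hn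
        have hc : (n:ℝ) ≤ 2*Hr := by rw [hHrdef]; exact_mod_cast h2
        congr 1
        exact min_eq_left (by linarith)
      rw [Finset.sum_congr rfl hcongr]
      have htel : ∑ n ∈ Finset.Ioc H (2*H-1), ((n:ℝ) - Hr)/(n:ℝ)^2
          ≤ Real.log 2 - 1/2 + 1/Hr := by
        rw [← Finset.Icc_add_one_left_eq_Ioc]
        have hstep : ∀ n, H+1 ≤ n → n ≤ 2*H-1 →
            ((n:ℝ) - Hr)/(n:ℝ)^2
            ≤ (Real.log ((n+1:ℕ):ℝ) + Hr/((n+1:ℕ):ℝ)) - (Real.log (n:ℝ) + Hr/(n:ℝ)) := by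
          intro n h1 h2
          have c1 : Hr + 1 ≤ (n:ℝ) := by rw [hHrdef]; exact_mod_cast h1
          have c2 : (n:ℝ) ≤ 2*Hr - 1 := by
            have h3 : n + 1 ≤ 2*H := by omega
            have h4 : (n:ℝ) + 1 ≤ 2*Hr := by rw [hHrdef]; exact_mod_cast h3
            linarith
          have key := stepUpR Hr (n:ℝ) hHr1 c1 c2
          push_cast
          linarith
        have h := sum_Icc_le_tele (fun n : ℕ => ((n:ℝ) - Hr)/(n:ℝ)^2)
          (fun n : ℕ => Real.log (n:ℝ) + Hr/(n:ℝ)) (H+1) (2*H-1) (by omega) hstep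
        refine le_trans h ?_
        rw [show (2*H-1)+1 = 2*H from by omega]
        have v2H : Real.log ((2*H:ℕ):ℝ) + Hr/((2*H:ℕ):ℝ) = Real.log 2 + Real.log Hr + 1/2 := by
          rw [e2H, Real.log_mul two_ne_zero (ne_of_gt hHr0),
            show Hr/(2*Hr) = 1/2 from by rw [div_eq_div_iff (by positivity) (by norm_num)]; ring]
        have vH1 : Real.log Hr + 1 - 1/Hr ≤ Real.log ((H+1:ℕ):ℝ) + Hr/((H+1:ℕ):ℝ) := by
          have e : ((H+1:ℕ):ℝ) = Hr+1 := by rw [hHrdef]; push_cast; ring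
          rw [e]
          have l1 : Real.log Hr ≤ Real.log (Hr+1) := Real.log_le_log hHr0 (by linarith)
          have l2 : 1 - 1/Hr ≤ Hr/(Hr+1) := by
            have e3 : (1:ℝ) - 1/Hr = (Hr-1)/Hr := by field_simp
            rw [e3, div_le_div_iff₀ hHr0 (by linarith)]
            nlinarith
          linarith
        rw [v2H]
        linarith
      rw [show 2*H = (2*H-1)+1 from by omega,
        Finset.sum_Ioc_succ_top (show H ≤ 2*H-1 by omega),
        show (2*H-1)+1 = 2*H from by omega]
      have vtop : (((2*H:ℕ):ℝ) - Hr)/((2*H:ℕ):ℝ)^2 = 1/(4*Hr) := by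
        rw [e2H]
        rw [div_eq_div_iff (by positivity) (by positivity)]
        ring
      rw [vtop]
      linarith
    have hS2b : ∑ n ∈ Finset.Ioc (2*H) (3*H), min ((n:ℝ) - Hr) (3*Hr - (n:ℝ))/(n:ℝ)^2
        ≤ 1/2 + Real.log 2 - Real.log 3 := by
      have hcongr : ∀ n ∈ Finset.Ioc (2*H) (3*H),
          min ((n:ℝ) - Hr) (3*Hr - (n:ℝ))/(n:ℝ)^2 = (3*Hr - (n:ℝ))/(n:ℝ)^2 := by
        intro n hn
        obtain ⟨h1, h2⟩ := Finset.mem_Ioc.mp hn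
        have hc : 2*Hr + 1 ≤ (n:ℝ) := by
          rw [hHrdef]
          have : 2*H + 1 ≤ n := by omega
          exact_mod_cast this
        congr 1
        exact min_eq_right (by linarith)
      rw [Finset.sum_congr rfl hcongr, ← Finset.Icc_add_one_left_eq_Ioc]
      have hstep : ∀ n, 2*H+1 ≤ n → n ≤ 3*H →
          (3*Hr - (n:ℝ))/(n:ℝ)^2
          ≤ (-(3*Hr)/(((n+1:ℕ):ℝ)-1) - Real.log (((n+1:ℕ):ℝ)-1))
            - (-(3*Hr)/((n:ℝ)-1) - Real.log ((n:ℝ)-1)) := by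
        intro n h1 h2
        have c1 : 2*Hr + 1 ≤ (n:ℝ) := by rw [hHrdef]; exact_mod_cast h1
        have c2 : (n:ℝ) ≤ 3*Hr := by rw [hHrdef]; exact_mod_cast h2
        have key := stepDownR Hr (n:ℝ) hHr1 c1 c2
        have e : ((n+1:ℕ):ℝ) - 1 = (n:ℝ) := by push_cast; ring
        rw [e]
        linarith
      have h := sum_Icc_le_tele (fun n : ℕ => (3*Hr - (n:ℝ))/(n:ℝ)^2)
        (fun n : ℕ => -(3*Hr)/((n:ℝ)-1) - Real.log ((n:ℝ)-1)) (2*H+1) (3*H) (by omega) hstep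
      refine le_trans h ?_
      have e3H : ((3*H+1:ℕ):ℝ) - 1 = 3*Hr := by rw [hHrdef]; push_cast; ring
      have e2H' : ((2*H+1:ℕ):ℝ) - 1 = 2*Hr := by rw [hHrdef]; push_cast; ring
      rw [e3H, e2H']
      have w1 : -(3*Hr)/(3*Hr) = -1 := by
        rw [neg_div, div_self (by positivity : (3*Hr) ≠ 0)]
      have w2 : -(3*Hr)/(2*Hr) = -(3/2) := by
        rw [neg_div, show (3*Hr)/(2*Hr) = 3/2 from by
          rw [div_eq_div_iff (by positivity) (by norm_num)]; ring]
      have w3 : Real.log (3*Hr) = Real.log 3 + Real.log Hr :=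
        Real.log_mul (by norm_num) (ne_of_gt hHr0)
      have w4 : Real.log (2*Hr) = Real.log 2 + Real.log Hr :=
        Real.log_mul (by norm_num) (ne_of_gt hHr0)
      rw [w1, w2, w3, w4]
      ring_nf
      linarith
    have hsplit := Finset.sum_Ioc_consecutive
      (f := fun n : ℕ => min ((n:ℝ) - Hr) (3*Hr - (n:ℝ))/(n:ℝ)^2)
      (show H ≤ 2*H by omega) (show 2*H ≤ 3*H by omega)
    rw [Finset.Icc_add_one_left_eq_Ioc, ← hsplit]
    linarith
  have lid : Real.log (4/3) = 2*Real.log 2 - Real.log 3 := by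
    rw [Real.log_div (by norm_num) (by norm_num), show (4:ℝ) = 2^2 by norm_num, Real.log_pow]
    push_cast; ring
  rw [lid]
  have : (9:ℝ)/(2*Hr) = 2*(1/Hr) + 2*(1/(4*Hr)) + 2/Hr := by field_simp; ring
  rw [this]
  linarith

end TileAux

/-- upper bound on the tile–distant-stripe interaction:
`Σ_{n₁∈ℤ} Σ_{n₂=h/2+1}^{3h/2} min{n₂−h/2, 3h/2−n₂}/(n₁²+n₂²)^{3/2} ≤ 2 log(4/3) + C/h`. -/
theorem tile_distant_stripe_upper_bound :
    ∃ C > (0:ℝ), ∃ h₀ : ℕ, ∀ h : ℕ, h₀ ≤ h → Even h →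
    ∑' n₁ : ℤ, ∑ n₂ ∈ Finset.Icc (h/2 + 1) (3*h/2),
        min ((n₂:ℝ) - (h:ℝ)/2) (3*(h:ℝ)/2 - (n₂:ℝ)) / (((n₁:ℝ)^2 + (n₂:ℝ)^2) ^ ((3:ℝ)/2))
      ≤ 2 * Real.log (4/3) + C / h := by
  refine ⟨9, by norm_num, 2, ?_⟩
  intro h hh2 heven
  obtain ⟨H, rfl⟩ := heven
  have hH : 1 ≤ H := by omega
  rw [show (H+H)/2 = H from by omega, show 3*(H+H)/2 = 3*H from by omega]
  have ecast : ((H+H:ℕ):ℝ) = 2*(H:ℝ) := by push_cast; ring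
  simp only [ecast, show 2*(H:ℝ)/2 = (H:ℝ) from by ring,
    show 3*(2*(H:ℝ))/2 = 3*(H:ℝ) from by ring]
  have hm : ∀ n₂ ∈ Finset.Icc (H+1) (3*H), (1:ℝ) ≤ ((n₂:ℕ):ℝ) := by
    intro n₂ hn₂
    have := (Finset.mem_Icc.mp hn₂).1
    have : 1 ≤ n₂ := by omega
    exact_mod_cast this
  have hc0 : ∀ n₂ ∈ Finset.Icc (H+1) (3*H),
      0 ≤ min ((n₂:ℝ) - (H:ℝ)) (3*(H:ℝ) - (n₂:ℝ)) := by
    intro n₂ hn₂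
    obtain ⟨h1, h2⟩ := Finset.mem_Icc.mp hn₂
    have c1 : (H:ℝ) + 1 ≤ (n₂:ℝ) := by exact_mod_cast h1
    have c2 : (n₂:ℝ) ≤ 3*(H:ℝ) := by exact_mod_cast h2
    exact le_min (by linarith) (by linarith)
  calc ∑' n₁ : ℤ, ∑ n₂ ∈ Finset.Icc (H+1) (3*H),
        min ((n₂:ℝ) - (H:ℝ)) (3*(H:ℝ) - (n₂:ℝ)) /
          (((n₁:ℝ)^2 + (n₂:ℝ)^2) ^ ((3:ℝ)/2))
      = ∑' n₁ : ℤ, ∑ n₂ ∈ Finset.Icc (H+1) (3*H),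
        min ((n₂:ℝ) - (H:ℝ)) (3*(H:ℝ) - (n₂:ℝ)) *
          (1/(((n₁:ℝ)^2 + (n₂:ℝ)^2) ^ ((3:ℝ)/2))) := by
        apply tsum_congr; intro n₁
        exact Finset.sum_congr rfl (fun n₂ _ => (mul_one_div _ _).symm)
    _ = ∑ n₂ ∈ Finset.Icc (H+1) (3*H), ∑' n₁ : ℤ,
        min ((n₂:ℝ) - (H:ℝ)) (3*(H:ℝ) - (n₂:ℝ)) *
          (1/(((n₁:ℝ)^2 + (n₂:ℝ)^2) ^ ((3:ℝ)/2))) := by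
        exact Summable.tsum_finsetSum (fun n₂ hn₂ => ((zsum ((n₂:ℕ):ℝ) (hm n₂ hn₂)).1).mul_left _)
    _ = ∑ n₂ ∈ Finset.Icc (H+1) (3*H),
        min ((n₂:ℝ) - (H:ℝ)) (3*(H:ℝ) - (n₂:ℝ)) *
          ∑' n₁ : ℤ, (1/(((n₁:ℝ)^2 + (n₂:ℝ)^2) ^ ((3:ℝ)/2))) :=
        Finset.sum_congr rfl (fun n₂ _ => tsum_mul_left)
    _ ≤ ∑ n₂ ∈ Finset.Icc (H+1) (3*H),
        min ((n₂:ℝ) - (H:ℝ)) (3*(H:ℝ) - (n₂:ℝ)) * (2/(n₂:ℝ)^2 + 1/(n₂:ℝ)^3) := by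
        apply Finset.sum_le_sum
        intro n₂ hn₂
        exact mul_le_mul_of_nonneg_left ((zsum ((n₂:ℕ):ℝ) (hm n₂ hn₂)).2) (hc0 n₂ hn₂)
    _ ≤ 2*Real.log (4/3) + (9:ℝ)/(2*(H:ℝ)) := sumN2 H hH
end

section
/- There exists h₀ ∈ ℕ such that for all integers h₁ ≥ h₂ ≥ h₀ with h₂ even, (1/h₁)·Σ_{n₁=1}^∞ min{n₁, h₁} · Σ_{n₂=1}^{h₂} min{n₂, h₂ − n₂}/(n₁² + n₂²)^{3/2} < 2·h₂/h₁. -/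
open scoped BigOperators
open MeasureTheory

lemma rpow32 (x : ℝ) (hx : 0 ≤ x) : x ^ ((3:ℝ)/2) = Real.sqrt x ^ 3 := by
  rw [Real.sqrt_eq_rpow, ← Real.rpow_natCast (x ^ ((1:ℝ)/2)) 3, ← Real.rpow_mul hx]
  norm_num

lemma step (c : ℝ) (hc : 0 < c) (k : ℕ) :
    ((k:ℝ)+1) / (((k:ℝ)+1)^2 + c^2) ^ ((3:ℝ)/2)
      ≤ 2 * (1/Real.sqrt ((k:ℝ)^2+c^2) - 1/Real.sqrt (((k:ℝ)+1)^2+c^2)) := by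
  have hk : (0:ℝ) ≤ (k:ℝ) := Nat.cast_nonneg k
  set A := Real.sqrt ((k:ℝ)^2+c^2) with hA
  set B := Real.sqrt (((k:ℝ)+1)^2+c^2) with hB
  have hA2 : A^2 = (k:ℝ)^2+c^2 := Real.sq_sqrt (by positivity)
  have hB2 : B^2 = ((k:ℝ)+1)^2+c^2 := Real.sq_sqrt (by positivity)
  have hA0 : 0 < A := Real.sqrt_pos.2 (by positivity)
  have hB0 : 0 < B := Real.sqrt_pos.2 (by positivity)
  have hAB : A ≤ B := Real.sqrt_le_sqrt (by nlinarith)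
  rw [rpow32 _ (by positivity), ← hB]
  have hdiff : 1/A - 1/B = (B-A)/(A*B) := by field_simp
  rw [div_le_iff₀ (by positivity), hdiff]
  rw [show 2*((B-A)/(A*B))*B^3 = 2*(B-A)*B^3/(A*B) by ring, le_div_iff₀ (by positivity)]
  have h1 : (B-A)*(B+A) = 2*(k:ℝ)+1 := by nlinarith
  have h2 : 2*(k:ℝ)+1 ≤ 2*(B-A)*B := by nlinarith [sub_nonneg.2 hAB]
  nlinarith [mul_le_mul_of_nonneg_right h2 (sq_nonneg B),
    mul_le_mul_of_nonneg_right (mul_le_mul_of_nonneg_right hAB hB0.le) (sq_nonneg B),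
    mul_le_mul_of_nonneg_left hAB hB0.le, sq_nonneg B, mul_pos hA0 hB0]

lemma sumN (c : ℝ) (hc : 0 < c) (N : ℕ) :
    ∑ n ∈ Finset.Icc 1 N, (n:ℝ)/((n:ℝ)^2+c^2)^((3:ℝ)/2) ≤ 2/c := by
  rw [← Finset.Ico_add_one_right_eq_Icc, Finset.sum_Ico_eq_sum_range]
  norm_num
  have hle : ∑ k ∈ Finset.range N, ((1:ℝ)+(k:ℝ))/(((1:ℝ)+(k:ℝ))^2+c^2)^((3:ℝ)/2)
      ≤ ∑ k ∈ Finset.range N, 2 * (1/Real.sqrt ((k:ℝ)^2+c^2) - 1/Real.sqrt (((k:ℝ)+1)^2+c^2)) := by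
    refine Finset.sum_le_sum fun k _ => ?_
    rw [add_comm (1:ℝ) (k:ℝ)]
    exact step c hc k
  refine hle.trans ?_
  rw [← Finset.mul_sum]
  have htel : ∑ k ∈ Finset.range N, (1/Real.sqrt ((k:ℝ)^2+c^2) - 1/Real.sqrt (((k:ℝ)+1)^2+c^2))
      = 1/Real.sqrt ((0:ℝ)^2+c^2) - 1/Real.sqrt ((N:ℝ)^2+c^2) := by
    have := Finset.sum_range_sub' (fun k => 1/Real.sqrt ((k:ℝ)^2+c^2)) N
    simpa using this
  rw [htel]
  have h0 : Real.sqrt ((0:ℝ)^2+c^2) = c := by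
    rw [show (0:ℝ)^2+c^2 = c^2 by ring, Real.sqrt_sq hc.le]
  rw [h0]
  have : 0 ≤ 1/Real.sqrt ((N:ℝ)^2+c^2) := by positivity
  rw [div_eq_mul_one_div 2 c] at *
  nlinarith

lemma sumP (c : ℝ) (hc : 0 < c) (s : Finset ℕ+) :
    ∑ n ∈ s, (n:ℝ)/((n:ℝ)^2+c^2)^((3:ℝ)/2) ≤ 2/c := by
  classical
  have himg : ∑ n ∈ s, ((n:ℕ):ℝ)/(((n:ℕ):ℝ)^2+c^2)^((3:ℝ)/2)
      = ∑ m ∈ s.image (fun p : ℕ+ => (p:ℕ)), (m:ℝ)/((m:ℝ)^2+c^2)^((3:ℝ)/2) := by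
    rw [Finset.sum_image]
    intro a _ b _ h
    exact PNat.coe_injective h
  rw [himg]
  refine le_trans (Finset.sum_le_sum_of_subset_of_nonneg ?_ ?_) (sumN c hc ((s.image (fun p : ℕ+ => (p:ℕ))).sup id))
  · intro m hm
    simp only [Finset.mem_image] at hm
    obtain ⟨p, hp, rfl⟩ := hm
    refine Finset.mem_Icc.2 ⟨p.one_le, ?_⟩
    exact Finset.le_sup (f := id) (Finset.mem_image_of_mem _ hp)
  · intro m _ _
    positivity

lemma lastPart (k : ℕ) :
    ∑ n₂ ∈ Finset.Icc 1 (k+1), min (n₂:ℝ) (((k+1:ℕ):ℝ)-(n₂:ℝ)) * (2/(n₂:ℝ))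
      ≤ 2*(((k+1:ℕ):ℝ)-1) := by
  rw [Finset.sum_Icc_succ_top (Nat.le_add_left 1 k)]
  have hlast : min ((k+1:ℕ):ℝ) (((k+1:ℕ):ℝ)-((k+1:ℕ):ℝ)) * (2/((k+1:ℕ):ℝ)) = 0 := by
    rw [sub_self, min_eq_right (by positivity), zero_mul]
  rw [hlast, add_zero]
  have : ∑ n₂ ∈ Finset.Icc 1 k, min (n₂:ℝ) (((k+1:ℕ):ℝ)-(n₂:ℝ)) * (2/(n₂:ℝ))
      ≤ ∑ n₂ ∈ Finset.Icc 1 k, (2:ℝ) := by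
    refine Finset.sum_le_sum fun m hm => ?_
    have hm1 : 1 ≤ m := (Finset.mem_Icc.1 hm).1
    have hmpos : (0:ℝ) < (m:ℝ) := by exact_mod_cast hm1
    have : min (m:ℝ) (((k+1:ℕ):ℝ)-(m:ℝ)) * (2/(m:ℝ)) ≤ (m:ℝ) * (2/(m:ℝ)) :=
      mul_le_mul_of_nonneg_right (min_le_left _ _) (by positivity)
    refine this.trans ?_
    rw [mul_div_assoc', mul_comm, mul_div_assoc, div_self hmpos.ne', mul_one]
  refine this.trans ?_
  rw [Finset.sum_const, Nat.card_Icc]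
  push_cast
  ring_nf
  norm_num

/-- the corner interaction bound
`(1/h₁) Σ_{n₁≥1} min{n₁,h₁} Σ_{n₂=1}^{h₂} min{n₂,h₂−n₂}/(n₁²+n₂²)^{3/2} < 2h₂/h₁`. -/
theorem corner_interaction_bound :
    ∃ h₀ : ℕ, ∀ h₁ h₂ : ℕ, h₀ ≤ h₂ → h₂ ≤ h₁ → Even h₂ →
    (1/(h₁:ℝ)) * ∑' n₁ : ℕ+, min (n₁:ℝ) (h₁:ℝ) *
        ∑ n₂ ∈ Finset.Icc 1 h₂,
          min (n₂:ℝ) ((h₂:ℝ) - (n₂:ℝ)) / (((n₁:ℝ)^2 + (n₂:ℝ)^2) ^ ((3:ℝ)/2))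
      < 2 * (h₂:ℝ) / (h₁:ℝ) := by
  refine ⟨1, fun h₁ h₂ hh₂ hle _ => ?_⟩
  have hh₁ : 1 ≤ h₁ := le_trans hh₂ hle
  have h₁pos : (0:ℝ) < (h₁:ℝ) := by exact_mod_cast hh₁
  obtain ⟨k, rfl⟩ : ∃ k, h₂ = k + 1 := ⟨h₂ - 1, by omega⟩
  -- nonnegativity of the inner min
  have hmin : ∀ n₂ ∈ Finset.Icc 1 (k+1), (0:ℝ) ≤ min (n₂:ℝ) (((k+1:ℕ):ℝ)-(n₂:ℝ)) := by
    intro n₂ hn₂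
    obtain ⟨h1, h2⟩ := Finset.mem_Icc.1 hn₂
    refine le_min (by exact_mod_cast Nat.zero_le n₂) (sub_nonneg.2 (by exact_mod_cast h2))
  have key : ∀ s : Finset ℕ+,
      ∑ n₁ ∈ s, (min (n₁:ℝ) (h₁:ℝ) *
        ∑ n₂ ∈ Finset.Icc 1 (k+1),
          min (n₂:ℝ) (((k+1:ℕ):ℝ) - (n₂:ℝ)) / (((n₁:ℝ)^2 + (n₂:ℝ)^2) ^ ((3:ℝ)/2)))
      ≤ 2*(((k+1:ℕ):ℝ)-1) := by
    intro s
    have step1 : ∀ n₁ : ℕ+, min (n₁:ℝ) (h₁:ℝ) *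
        (∑ n₂ ∈ Finset.Icc 1 (k+1),
          min (n₂:ℝ) (((k+1:ℕ):ℝ) - (n₂:ℝ)) / (((n₁:ℝ)^2 + (n₂:ℝ)^2) ^ ((3:ℝ)/2)))
        ≤ ∑ n₂ ∈ Finset.Icc 1 (k+1),
          min (n₂:ℝ) (((k+1:ℕ):ℝ) - (n₂:ℝ)) * ((n₁:ℝ) / (((n₁:ℝ)^2 + (n₂:ℝ)^2) ^ ((3:ℝ)/2))) := by
      intro n₁
      have hinner : (0:ℝ) ≤ ∑ n₂ ∈ Finset.Icc 1 (k+1),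
          min (n₂:ℝ) (((k+1:ℕ):ℝ) - (n₂:ℝ)) / (((n₁:ℝ)^2 + (n₂:ℝ)^2) ^ ((3:ℝ)/2)) := by
        refine Finset.sum_nonneg fun n₂ hn₂ => div_nonneg (hmin n₂ hn₂) (by positivity)
      calc min (n₁:ℝ) (h₁:ℝ) * _ ≤ (n₁:ℝ) * ∑ n₂ ∈ Finset.Icc 1 (k+1),
              min (n₂:ℝ) (((k+1:ℕ):ℝ) - (n₂:ℝ)) / (((n₁:ℝ)^2 + (n₂:ℝ)^2) ^ ((3:ℝ)/2)) :=
            mul_le_mul_of_nonneg_right (min_le_left _ _) hinner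
        _ = _ := by rw [Finset.mul_sum]; exact Finset.sum_congr rfl fun n₂ _ => by ring
    calc ∑ n₁ ∈ s, (min (n₁:ℝ) (h₁:ℝ) * ∑ n₂ ∈ Finset.Icc 1 (k+1),
            min (n₂:ℝ) (((k+1:ℕ):ℝ) - (n₂:ℝ)) / (((n₁:ℝ)^2 + (n₂:ℝ)^2) ^ ((3:ℝ)/2)))
        ≤ ∑ n₁ ∈ s, ∑ n₂ ∈ Finset.Icc 1 (k+1),
            min (n₂:ℝ) (((k+1:ℕ):ℝ) - (n₂:ℝ)) * ((n₁:ℝ) / (((n₁:ℝ)^2 + (n₂:ℝ)^2) ^ ((3:ℝ)/2))) :=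
          Finset.sum_le_sum fun n₁ _ => step1 n₁
      _ = ∑ n₂ ∈ Finset.Icc 1 (k+1), min (n₂:ℝ) (((k+1:ℕ):ℝ) - (n₂:ℝ)) *
            ∑ n₁ ∈ s, ((n₁:ℝ) / (((n₁:ℝ)^2 + (n₂:ℝ)^2) ^ ((3:ℝ)/2))) := by
          rw [Finset.sum_comm]
          exact Finset.sum_congr rfl fun n₂ _ => by rw [Finset.mul_sum]
      _ ≤ ∑ n₂ ∈ Finset.Icc 1 (k+1), min (n₂:ℝ) (((k+1:ℕ):ℝ) - (n₂:ℝ)) * (2/(n₂:ℝ)) := by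
          refine Finset.sum_le_sum fun n₂ hn₂ => ?_
          have hn₂pos : (0:ℝ) < (n₂:ℝ) := by
            exact_mod_cast (Finset.mem_Icc.1 hn₂).1
          exact mul_le_mul_of_nonneg_left (sumP (n₂:ℝ) hn₂pos s) (hmin n₂ hn₂)
      _ ≤ 2*(((k+1:ℕ):ℝ)-1) := lastPart k
  have htsum : ∑' n₁ : ℕ+, min (n₁:ℝ) (h₁:ℝ) *
        ∑ n₂ ∈ Finset.Icc 1 (k+1),
          min (n₂:ℝ) (((k+1:ℕ):ℝ) - (n₂:ℝ)) / (((n₁:ℝ)^2 + (n₂:ℝ)^2) ^ ((3:ℝ)/2))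
      ≤ 2*(((k+1:ℕ):ℝ)-1) := by
    refine tsum_le_of_sum_le' ?_ key
    have : (1:ℝ) ≤ ((k+1:ℕ):ℝ) := by exact_mod_cast Nat.le_add_left 1 k
    linarith
  have h1 : (1/(h₁:ℝ)) * ∑' n₁ : ℕ+, min (n₁:ℝ) (h₁:ℝ) *
        ∑ n₂ ∈ Finset.Icc 1 (k+1),
          min (n₂:ℝ) (((k+1:ℕ):ℝ) - (n₂:ℝ)) / (((n₁:ℝ)^2 + (n₂:ℝ)^2) ^ ((3:ℝ)/2))
      ≤ (1/(h₁:ℝ)) * (2*(((k+1:ℕ):ℝ)-1)) :=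
    mul_le_mul_of_nonneg_left htsum (by positivity)
  refine lt_of_le_of_lt h1 ?_
  rw [div_eq_mul_inv (2*((k+1:ℕ):ℝ)), mul_comm (2*((k+1:ℕ):ℝ)) ((h₁:ℝ))⁻¹, ← one_div]
  refine mul_lt_mul_of_pos_left ?_ (by positivity)
  linarith
end

section
/- There exists h₀ ∈ ℕ such that for all integers h₁ ≥ h₂ ≥ h₀, (1/h₂)·Σ_{n₁ = h₂+1}^∞ min{n₁ − h₂, h₁ − h₂} · Σ_{n₂ = −h₂}^{h₂} (h₂ − |n₂|)/(n₁² + n₂²)^{3/2} ≤ 1/2 + h₂/(2h₁). -/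
open scoped BigOperators
open MeasureTheory

noncomputable def phiAux (a x : ℝ) : ℝ := 2*a^2/(2*x-1) - a^3/(2*x^2-2*x+1)
noncomputable def tauAux (a b x : ℝ) : ℝ := (b-a)*a^2/(2*x*(x-1))
noncomputable def rhoAux (h H n : ℕ) : ℝ :=
  if n ≤ h then phiAux (h:ℝ) ((h:ℝ)+1)
  else if n ≤ H then phiAux (h:ℝ) (n:ℝ)
  else tauAux (h:ℝ) (H:ℝ) (n:ℝ)



lemma phiAux_shift (a : ℝ) : phiAux a (a+1) = 2*a^2/(2*a+1) - a^3/(2*a^2+2*a+1) := by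
  unfold phiAux
  rw [show 2*(a+1)-1 = 2*a+1 by ring, show 2*(a+1)^2-2*(a+1)+1 = 2*a^2+2*a+1 by ring]

lemma phiAux_nonneg {a x : ℝ} (ha : 0 ≤ a) (hax : a + 1 ≤ x) : 0 ≤ phiAux a x := by
  have hx : (1:ℝ) ≤ x := by linarith
  have d1 : (0:ℝ) < 2*x-1 := by linarith
  have d3 : (0:ℝ) < 2*x^2-2*x+1 := by nlinarith
  unfold phiAux
  rw [sub_nonneg, div_le_div_iff₀ d3 d1]
  have h1 : a*(2*x-1) ≤ (x-1)*(2*x-1) :=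
    mul_le_mul_of_nonneg_right (by linarith) (by linarith)
  nlinarith [mul_le_mul_of_nonneg_left h1 (sq_nonneg a),
    mul_nonneg (sq_nonneg a) (show (0:ℝ) ≤ 2*x^2-x+1 by nlinarith)]

lemma phiAux_base_nonneg {a : ℝ} (ha : 0 ≤ a) : 0 ≤ phiAux a (a+1) :=
  phiAux_nonneg ha le_rfl

lemma tauAux_nonneg {a b x : ℝ} (ha : 0 ≤ a) (hab : a ≤ b) (hx : 2 ≤ x) :
    0 ≤ tauAux a b x := by
  unfold tauAux
  apply div_nonneg (mul_nonneg (by linarith) (sq_nonneg a))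
  nlinarith

lemma phiAux_base_le {a : ℝ} (ha : 0 ≤ a) : phiAux a (a+1) ≤ a/2 := by
  rw [phiAux_shift]
  have d1 : (0:ℝ) < 2*a+1 := by linarith
  have d2 : (0:ℝ) < 2*a^2+2*a+1 := by positivity
  rw [div_sub_div _ _ (ne_of_gt d1) (ne_of_gt d2), div_le_div_iff₀ (by positivity) (by norm_num)]
  nlinarith

lemma tele_mid {a x : ℝ} (ha : 0 ≤ a) (hax : a + 1 ≤ x) :
    (x - a) * (a^2 / x^3) ≤ phiAux a x - phiAux a (x+1) := by
  have hx : (1:ℝ) ≤ x := by linarith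
  have hx0 : (0:ℝ) < x := by linarith
  have d1 : (0:ℝ) < 2*x-1 := by linarith
  have d2 : (0:ℝ) < 2*x+1 := by linarith
  have d3 : (0:ℝ) < 2*x^2-2*x+1 := by nlinarith
  have d4 : (0:ℝ) < 2*x^2+2*x+1 := by nlinarith
  unfold phiAux
  rw [show 2*(x+1)-1 = 2*x+1 by ring, show 2*(x+1)^2-2*(x+1)+1 = 2*x^2+2*x+1 by ring]
  have s1 : a^2/x^2 ≤ 2*a^2/(2*x-1) - 2*a^2/(2*x+1) := by
    rw [div_sub_div _ _ (ne_of_gt d1) (ne_of_gt d2),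
      div_le_div_iff₀ (by positivity) (by positivity)]
    nlinarith [sq_nonneg a]
  have s2 : a^3/(2*x^2-2*x+1) - a^3/(2*x^2+2*x+1) ≤ a^3/x^3 := by
    rw [div_sub_div _ _ (ne_of_gt d3) (ne_of_gt d4),
      div_le_div_iff₀ (by positivity) (by positivity)]
    nlinarith [pow_nonneg ha 3, pow_pos hx0 3]
  have s3 : (x - a) * (a^2 / x^3) = a^2/x^2 - a^3/x^3 := by
    field_simp
  linarith

lemma tele_tail {a b x : ℝ} (ha : 0 ≤ a) (hab : a ≤ b) (hx : 2 ≤ x) :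
    (b - a) * (a^2 / x^3) ≤ tauAux a b x - tauAux a b (x+1) := by
  have hx0 : (0:ℝ) < x := by linarith
  have d1 : (0:ℝ) < 2*x*(x-1) := by nlinarith
  have d2 : (0:ℝ) < 2*(x+1)*((x+1)-1) := by nlinarith
  unfold tauAux
  rw [div_sub_div _ _ (ne_of_gt d1) (ne_of_gt d2),
    show (b - a) * (a^2 / x^3) = ((b-a)*a^2)/x^3 by ring,
    div_le_div_iff₀ (by positivity) (by positivity)]
  have hba : (0:ℝ) ≤ b - a := by linarith
  nlinarith [mul_nonneg (mul_nonneg hba (sq_nonneg a)) (sq_nonneg x),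
    mul_nonneg (mul_nonneg hba (sq_nonneg a)) (mul_nonneg (le_of_lt hx0) (le_of_lt hx0))]

lemma phi_ge_tau {a b : ℝ} (ha : 0 ≤ a) (hab : a ≤ b) (hb : 1 ≤ b) :
    tauAux a b (b+1) ≤ phiAux a (b+1) := by
  unfold phiAux tauAux
  rw [show 2*(b+1)-1 = 2*b+1 by ring, show 2*(b+1)^2-2*(b+1)+1 = 2*b^2+2*b+1 by ring,
    show 2*(b+1)*((b+1)-1) = 2*(b+1)*b by ring]
  have d0 : (0:ℝ) < b := by linarith
  have d1 : (0:ℝ) < 2*b+1 := by linarith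
  have d2 : (0:ℝ) < 2*b^2+2*b+1 := by positivity
  have d3 : (0:ℝ) < 2*(b+1)*b := by positivity
  have d4 : (0:ℝ) < 2*b+2 := by linarith
  have t1 : a^3/(2*b^2+2*b+1) ≤ a^2/(2*b+2) := by
    rw [div_le_div_iff₀ d2 d4]
    nlinarith [mul_nonneg (mul_nonneg (sq_nonneg a) (le_of_lt d4)) (sub_nonneg.mpr hab),
      sq_nonneg a]
  have t2 : (b-a)*a^2/(2*(b+1)*b) ≤ a^2/(2*b+2) := by
    rw [div_le_div_iff₀ d3 d4]
    nlinarith [mul_nonneg (mul_nonneg (sq_nonneg a) ha) (le_of_lt d4)]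
  have t3 : a^2/(2*b+2) + a^2/(2*b+2) ≤ 2*a^2/(2*b+1) := by
    rw [← add_div, div_le_div_iff₀ d4 d1]
    nlinarith [sq_nonneg a]
  linarith

lemma sum_tri (h : ℕ) :
    ∑ n₂ ∈ Finset.Icc (-(h:ℤ)) (h:ℤ), ((h:ℝ) - |(n₂:ℝ)|) = (h:ℝ)^2 := by
  induction h with
  | zero => simp
  | succ k ih =>
    have hset : Finset.Icc (-((k:ℤ)+1)) ((k:ℤ)+1)
        = insert (-((k:ℤ)+1)) (insert ((k:ℤ)+1) (Finset.Icc (-(k:ℤ)) (k:ℤ))) := by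
      ext x
      simp only [Finset.mem_Icc, Finset.mem_insert]
      omega
    have hm1 : (-((k:ℤ)+1)) ∉ insert ((k:ℤ)+1) (Finset.Icc (-(k:ℤ)) (k:ℤ)) := by
      simp only [Finset.mem_insert, Finset.mem_Icc]
      omega
    have hm2 : ((k:ℤ)+1) ∉ Finset.Icc (-(k:ℤ)) (k:ℤ) := by
      simp only [Finset.mem_Icc]
      omega
    push_cast
    rw [hset, Finset.sum_insert hm1, Finset.sum_insert hm2]
    have hmid : ∑ n₂ ∈ Finset.Icc (-(k:ℤ)) (k:ℤ), ((k:ℝ) + 1 - |(n₂:ℝ)|)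
        = (∑ n₂ ∈ Finset.Icc (-(k:ℤ)) (k:ℤ), ((k:ℝ) - |(n₂:ℝ)|))
          + ∑ _n₂ ∈ Finset.Icc (-(k:ℤ)) (k:ℤ), (1:ℝ) := by
      rw [← Finset.sum_add_distrib]
      apply Finset.sum_congr rfl
      intro x _
      ring
    have hcard : ∑ _n₂ ∈ Finset.Icc (-(k:ℤ)) (k:ℤ), (1:ℝ) = 2*(k:ℝ)+1 := by
      rw [Finset.sum_const, Int.card_Icc]
      have h2 : ((k:ℤ) + 1 - -(k:ℤ)).toNat = 2*k+1 := by omega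
      rw [h2]
      push_cast
      ring
    have e1 : |(((-((k:ℤ)+1)) : ℤ):ℝ)| = (k:ℝ)+1 := by
      push_cast
      rw [abs_neg, abs_of_nonneg (by positivity)]
    have e2 : |((((k:ℤ)+1) : ℤ):ℝ)| = (k:ℝ)+1 := by
      push_cast
      rw [abs_of_nonneg (by positivity)]
    push_cast at e1 e2 hmid hcard ⊢
    rw [e1, e2, hmid, ih, hcard]
    ring

lemma inner_le (h n : ℕ) (hn : 1 ≤ n) :
    ∑ n₂ ∈ Finset.Icc (-(h:ℤ)) (h:ℤ),
        ((h:ℝ) - |(n₂:ℝ)|) / (((n:ℝ)^2 + (n₂:ℝ)^2) ^ ((3:ℝ)/2))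
      ≤ (h:ℝ)^2 / (n:ℝ)^3 := by
  have hn1 : (1:ℝ) ≤ (n:ℝ) := by exact_mod_cast hn
  have hn0 : (0:ℝ) < (n:ℝ) := by linarith
  have key : ∀ m ∈ Finset.Icc (-(h:ℤ)) (h:ℤ),
      ((h:ℝ) - |(m:ℝ)|) / (((n:ℝ)^2 + (m:ℝ)^2) ^ ((3:ℝ)/2))
        ≤ ((h:ℝ) - |(m:ℝ)|) / (n:ℝ)^3 := by
    intro m hm
    rw [Finset.mem_Icc] at hm
    have habs : |(m:ℝ)| ≤ (h:ℝ) := by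
      rw [abs_le]
      constructor
      · exact_mod_cast hm.1
      · exact_mod_cast hm.2
    have hnum : 0 ≤ (h:ℝ) - |(m:ℝ)| := by linarith
    have e : ((n:ℝ)^2) ^ ((3:ℝ)/2) = (n:ℝ)^3 := by
      rw [← Real.rpow_natCast (n:ℝ) 2, ← Real.rpow_mul (le_of_lt hn0),
        ← Real.rpow_natCast (n:ℝ) 3]
      norm_num
    have hden : ((n:ℝ))^3 ≤ ((n:ℝ)^2 + (m:ℝ)^2) ^ ((3:ℝ)/2) := by
      rw [← e]
      exact Real.rpow_le_rpow (by positivity)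
        (le_add_of_nonneg_right (sq_nonneg _)) (by norm_num)
    exact div_le_div_of_nonneg_left hnum (by positivity) hden
  calc ∑ n₂ ∈ Finset.Icc (-(h:ℤ)) (h:ℤ),
        ((h:ℝ) - |(n₂:ℝ)|) / (((n:ℝ)^2 + (n₂:ℝ)^2) ^ ((3:ℝ)/2))
      ≤ ∑ n₂ ∈ Finset.Icc (-(h:ℤ)) (h:ℤ), ((h:ℝ) - |(n₂:ℝ)|) / (n:ℝ)^3 :=
        Finset.sum_le_sum key
    _ = (∑ n₂ ∈ Finset.Icc (-(h:ℤ)) (h:ℤ), ((h:ℝ) - |(n₂:ℝ)|)) / (n:ℝ)^3 := by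
        rw [Finset.sum_div]
    _ = (h:ℝ)^2 / (n:ℝ)^3 := by rw [sum_tri]

lemma inner_nonneg (h n : ℕ) :
    0 ≤ ∑ n₂ ∈ Finset.Icc (-(h:ℤ)) (h:ℤ),
        ((h:ℝ) - |(n₂:ℝ)|) / (((n:ℝ)^2 + (n₂:ℝ)^2) ^ ((3:ℝ)/2)) := by
  apply Finset.sum_nonneg
  intro m hm
  rw [Finset.mem_Icc] at hm
  have habs : |(m:ℝ)| ≤ (h:ℝ) := by
    rw [abs_le]
    constructor
    · exact_mod_cast hm.1
    · exact_mod_cast hm.2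
  exact div_nonneg (by linarith) (Real.rpow_nonneg (by positivity) _)

/-- the rectangle–aligned-half-stripe interaction bound
`(1/h₂) Σ_{n₁>h₂} min{n₁−h₂,h₁−h₂} Σ_{n₂=−h₂}^{h₂} (h₂−|n₂|)/(n₁²+n₂²)^{3/2} ≤ 1/2 + h₂/(2h₁)`. -/
theorem aligned_halfstripe_bound :
    ∃ h₀ : ℕ, ∀ h₁ h₂ : ℕ, h₀ ≤ h₂ → h₂ ≤ h₁ →
    (1/(h₂:ℝ)) * ∑' n₁ : ℕ,
        (if h₂ < n₁ then
          min ((n₁:ℝ) - (h₂:ℝ)) ((h₁:ℝ) - (h₂:ℝ)) *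
            ∑ n₂ ∈ Finset.Icc (-(h₂:ℤ)) (h₂:ℤ),
              ((h₂:ℝ) - |(n₂:ℝ)|) / (((n₁:ℝ)^2 + (n₂:ℝ)^2) ^ ((3:ℝ)/2))
        else 0)
      ≤ 1/2 + (h₂:ℝ) / (2*(h₁:ℝ)) := by
  refine ⟨1, ?_⟩
  intro h₁ h₂ h1le hle
  set F : ℕ → ℝ := fun n₁ : ℕ =>
        (if h₂ < n₁ then
          min ((n₁:ℝ) - (h₂:ℝ)) ((h₁:ℝ) - (h₂:ℝ)) *
            ∑ n₂ ∈ Finset.Icc (-(h₂:ℤ)) (h₂:ℤ),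
              ((h₂:ℝ) - |(n₂:ℝ)|) / (((n₁:ℝ)^2 + (n₂:ℝ)^2) ^ ((3:ℝ)/2))
        else 0) with hF
  have ha1 : (1:ℝ) ≤ (h₂:ℝ) := by exact_mod_cast h1le
  have ha0 : (0:ℝ) ≤ (h₂:ℝ) := by linarith
  have hab : (h₂:ℝ) ≤ (h₁:ℝ) := by exact_mod_cast hle
  have hb1 : (1:ℝ) ≤ (h₁:ℝ) := le_trans ha1 hab
  -- nonnegativity of F
  have F_nonneg : ∀ n, 0 ≤ F n := by
    intro n
    rw [hF]
    dsimp only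
    split_ifs with hn
    · apply mul_nonneg
      · apply le_min
        · have : (h₂:ℝ) < (n:ℝ) := by exact_mod_cast hn
          linarith
        · linarith
      · exact inner_nonneg h₂ n
    · exact le_rfl
  -- key telescoping estimate
  have key : ∀ n, F n ≤ rhoAux h₂ h₁ n - rhoAux h₂ h₁ (n+1) := by
    intro n
    by_cases hn : h₂ < n
    · have hn1 : 1 ≤ n := by omega
      have hxa : (h₂:ℝ) + 1 ≤ (n:ℝ) := by exact_mod_cast hn
      have hx2 : (2:ℝ) ≤ (n:ℝ) := by exact_mod_cast (by omega : 2 ≤ n)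
      have hS := inner_le h₂ n hn1
      have hmin0 : 0 ≤ min ((n:ℝ) - (h₂:ℝ)) ((h₁:ℝ) - (h₂:ℝ)) := by
        apply le_min <;> linarith
      have hFle : F n ≤ min ((n:ℝ) - (h₂:ℝ)) ((h₁:ℝ) - (h₂:ℝ)) * ((h₂:ℝ)^2 / (n:ℝ)^3) := by
        rw [hF]
        dsimp only
        rw [if_pos hn]
        exact mul_le_mul_of_nonneg_left hS hmin0
      rcases lt_trichotomy n h₁ with hnH | hnH | hnH
      · -- middle: n < h₁
        have hr1 : rhoAux h₂ h₁ n = phiAux (h₂:ℝ) (n:ℝ) := by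
          rw [rhoAux, if_neg (by omega), if_pos (by omega)]
        have hr2 : rhoAux h₂ h₁ (n+1) = phiAux (h₂:ℝ) ((n:ℝ)+1) := by
          rw [rhoAux, if_neg (by omega), if_pos (by omega)]
          push_cast
          ring_nf
        rw [hr1, hr2]
        calc F n ≤ min ((n:ℝ) - (h₂:ℝ)) ((h₁:ℝ) - (h₂:ℝ)) * ((h₂:ℝ)^2 / (n:ℝ)^3) := hFle
          _ ≤ ((n:ℝ) - (h₂:ℝ)) * ((h₂:ℝ)^2 / (n:ℝ)^3) := by
              apply mul_le_mul_of_nonneg_right (min_le_left _ _) (by positivity)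
          _ ≤ phiAux (h₂:ℝ) (n:ℝ) - phiAux (h₂:ℝ) ((n:ℝ)+1) := tele_mid ha0 hxa
      · -- boundary: n = h₁
        have hr1 : rhoAux h₂ h₁ n = phiAux (h₂:ℝ) (n:ℝ) := by
          rw [rhoAux, if_neg (by omega), if_pos (by omega)]
        have hr2 : rhoAux h₂ h₁ (n+1) = tauAux (h₂:ℝ) (h₁:ℝ) ((n:ℝ)+1) := by
          rw [rhoAux, if_neg (by omega), if_neg (by omega)]
          push_cast
          ring_nf
        rw [hr1, hr2]
        have hbn : (h₁:ℝ) = (n:ℝ) := by rw [hnH]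
        have t1 : ((n:ℝ) - (h₂:ℝ)) * ((h₂:ℝ)^2 / (n:ℝ)^3)
            ≤ phiAux (h₂:ℝ) (n:ℝ) - phiAux (h₂:ℝ) ((n:ℝ)+1) := tele_mid ha0 hxa
        have t2 : tauAux (h₂:ℝ) (h₁:ℝ) ((n:ℝ)+1) ≤ phiAux (h₂:ℝ) ((n:ℝ)+1) := by
          rw [← hbn]
          exact phi_ge_tau ha0 hab hb1
        have t3 : F n ≤ ((n:ℝ) - (h₂:ℝ)) * ((h₂:ℝ)^2 / (n:ℝ)^3) := by
          refine le_trans hFle ?_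
          apply mul_le_mul_of_nonneg_right (min_le_left _ _) (by positivity)
        linarith
      · -- tail: h₁ < n
        have hr1 : rhoAux h₂ h₁ n = tauAux (h₂:ℝ) (h₁:ℝ) (n:ℝ) := by
          rw [rhoAux, if_neg (by omega), if_neg (by omega)]
        have hr2 : rhoAux h₂ h₁ (n+1) = tauAux (h₂:ℝ) (h₁:ℝ) ((n:ℝ)+1) := by
          rw [rhoAux, if_neg (by omega), if_neg (by omega)]
          push_cast
          ring_nf
        rw [hr1, hr2]
        calc F n ≤ min ((n:ℝ) - (h₂:ℝ)) ((h₁:ℝ) - (h₂:ℝ)) * ((h₂:ℝ)^2 / (n:ℝ)^3) := hFle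
          _ ≤ ((h₁:ℝ) - (h₂:ℝ)) * ((h₂:ℝ)^2 / (n:ℝ)^3) := by
              apply mul_le_mul_of_nonneg_right (min_le_right _ _) (by positivity)
          _ ≤ tauAux (h₂:ℝ) (h₁:ℝ) (n:ℝ) - tauAux (h₂:ℝ) (h₁:ℝ) ((n:ℝ)+1) :=
              tele_tail ha0 hab hx2
    · -- n ≤ h₂ : F n = 0
      have hF0 : F n = 0 := by rw [hF]; dsimp only; rw [if_neg hn]
      rw [hF0]
      have hr1 : rhoAux h₂ h₁ n = phiAux (h₂:ℝ) ((h₂:ℝ)+1) := by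
        rw [rhoAux, if_pos (by omega)]
      rcases lt_or_ge n h₂ with hlt | hge
      · have hr2 : rhoAux h₂ h₁ (n+1) = phiAux (h₂:ℝ) ((h₂:ℝ)+1) := by
          rw [rhoAux, if_pos (by omega)]
        rw [hr1, hr2]
        simp
      · have hnn : n = h₂ := by omega
        rcases lt_or_ge h₂ h₁ with hlt2 | hge2
        · have hr2 : rhoAux h₂ h₁ (n+1) = phiAux (h₂:ℝ) ((h₂:ℝ)+1) := by
            rw [rhoAux, if_neg (by omega), if_pos (by omega), hnn]
            push_cast
            ring_nf
          rw [hr1, hr2]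
          simp
        · have hh : h₁ = h₂ := by omega
          have hr2 : rhoAux h₂ h₁ (n+1) = 0 := by
            rw [rhoAux, if_neg (by omega), if_neg (by omega), hh, tauAux]
            simp
          rw [hr1, hr2, sub_zero]
          exact phiAux_nonneg ha0 le_rfl
  -- rho is nonnegative
  have rho_nonneg : ∀ n, 0 ≤ rhoAux h₂ h₁ n := by
    intro n
    rw [rhoAux]
    split_ifs with c1 c2
    · exact phiAux_nonneg ha0 le_rfl
    · have : (h₂:ℝ) + 1 ≤ (n:ℝ) := by exact_mod_cast (by omega : h₂ + 1 ≤ n)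
      exact phiAux_nonneg ha0 this
    · have : (2:ℝ) ≤ (n:ℝ) := by exact_mod_cast (by omega : 2 ≤ n)
      exact tauAux_nonneg ha0 hab this
  -- partial sums bounded
  have sum_le : ∀ N, ∑ i ∈ Finset.range N, F i ≤ rhoAux h₂ h₁ 0 := by
    intro N
    calc ∑ i ∈ Finset.range N, F i
        ≤ ∑ i ∈ Finset.range N, (rhoAux h₂ h₁ i - rhoAux h₂ h₁ (i+1)) :=
          Finset.sum_le_sum (fun i _ => key i)
      _ = rhoAux h₂ h₁ 0 - rhoAux h₂ h₁ N := Finset.sum_range_sub' _ N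
      _ ≤ rhoAux h₂ h₁ 0 := by linarith [rho_nonneg N]
  have tle : (∑' n, F n) ≤ rhoAux h₂ h₁ 0 := Real.tsum_le_of_sum_range_le F_nonneg sum_le
  have rho0 : rhoAux h₂ h₁ 0 ≤ (h₂:ℝ)/2 := by
    rw [rhoAux, if_pos (Nat.zero_le _)]
    exact phiAux_base_le ha0
  have hstep : (1/(h₂:ℝ)) * (∑' n, F n) ≤ (1/(h₂:ℝ)) * ((h₂:ℝ)/2) := by
    apply mul_le_mul_of_nonneg_left (le_trans tle rho0) (by positivity)
  have heq : (1/(h₂:ℝ)) * ((h₂:ℝ)/2) = 1/2 := by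
    field_simp
  have hfin : (0:ℝ) ≤ (h₂:ℝ) / (2*(h₁:ℝ)) := by positivity
  calc (1/(h₂:ℝ)) * (∑' n, F n) ≤ 1/2 := by rw [← heq]; exact hstep
    _ ≤ 1/2 + (h₂:ℝ) / (2*(h₁:ℝ)) := by linarith
end

section
/- There exists h₀ ∈ ℕ such that for every integer h ≥ h₀, (1/h)·Σ_{n₁=1}^∞ min{n₁, h} · Σ_{n₂ = 2h+1}^∞ min{n₂ − 2h, h}/(n₁² + n₂²)^{3/2} ≥ 0.36. -/
open scoped BigOperators
open MeasureTheory

section AUX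
open Filter


noncomputable def sq2 (x y : ℝ) : ℝ := Real.sqrt (x^2 + y^2)
noncomputable def Gf (x y : ℝ) : ℝ := 1 / (sq2 x y * (sq2 x y + y))
noncomputable def Hf (x y : ℝ) : ℝ := (x + y - sq2 x y) / (x * y)
noncomputable def psiR (x y : ℝ) : ℝ := 1 / ((x^2 + y^2) ^ ((3:ℝ)/2))

lemma sq2_nonneg (x y : ℝ) : 0 ≤ sq2 x y := Real.sqrt_nonneg _

lemma sq2_sq (x y : ℝ) : sq2 x y ^ 2 = x^2 + y^2 :=
  Real.sq_sqrt (by positivity)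

lemma sq2_pos (x y : ℝ) (hx : 0 < x) : 0 < sq2 x y := by
  apply Real.sqrt_pos.mpr; positivity

lemma sq2_symm (x y : ℝ) : sq2 x y = sq2 y x := by rw [sq2, sq2, add_comm]

lemma le_sq2_right (x y : ℝ) (hy : 0 ≤ y) : y ≤ sq2 x y := by
  conv_lhs => rw [← Real.sqrt_sq hy]
  exact Real.sqrt_le_sqrt (by nlinarith)

lemma le_sq2_left (x y : ℝ) (hx : 0 ≤ x) : x ≤ sq2 x y := by
  conv_lhs => rw [← Real.sqrt_sq hx]
  exact Real.sqrt_le_sqrt (by nlinarith)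

lemma sq2_le_add (x y : ℝ) (hx : 0 ≤ x) (hy : 0 ≤ y) : sq2 x y ≤ x + y := by
  conv_rhs => rw [← Real.sqrt_sq (by positivity : (0:ℝ) ≤ x + y)]
  exact Real.sqrt_le_sqrt (by nlinarith)

lemma rpow_three_halves (a : ℝ) (ha : 0 ≤ a) :
    a ^ ((3:ℝ)/2) = (Real.sqrt a)^3 := by
  rw [Real.sqrt_eq_rpow, ← Real.rpow_natCast (a ^ ((1:ℝ)/2)) 3, ← Real.rpow_mul ha]
  norm_num

lemma hasDerivAt_sq2 (x y : ℝ) (h : 0 < x) :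
    HasDerivAt (fun y : ℝ => sq2 x y) (y / sq2 x y) y := by
  have h1 : HasDerivAt (fun y : ℝ => x^2 + y^2) (2*y) y := by
    simpa using ((hasDerivAt_pow 2 y).const_add (x^2))
  have h2 := h1.sqrt (by positivity)
  convert h2 using 1
  · rfl
  rw [sq2]
  rw [eq_div_iff (by positivity), div_mul_eq_mul_div, mul_comm]
  field_simp

lemma hasDerivAt_sq2' (x y : ℝ) (h : 0 < y) :
    HasDerivAt (fun x : ℝ => sq2 x y) (x / sq2 x y) x := by
  have := hasDerivAt_sq2 y x h
  simp only [sq2] at this ⊢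
  rw [add_comm (x^2) (y^2)]
  convert this using 2
  rw [add_comm]

lemma hasDerivAt_Gf (x : ℝ) (hx : 0 < x) (y : ℝ) (hy : 0 ≤ y) :
    HasDerivAt (fun y => Gf x y) (-(psiR x y)) y := by
  have hs : 0 < sq2 x y := sq2_pos x y hx
  have hsy : 0 < sq2 x y + y := by linarith
  have hd : HasDerivAt (fun y => sq2 x y * (sq2 x y + y))
      ((y / sq2 x y) * (sq2 x y + y) + sq2 x y * (y / sq2 x y + 1)) y :=
    (hasDerivAt_sq2 x y hx).mul ((hasDerivAt_sq2 x y hx).add (hasDerivAt_id y))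
  have hne : sq2 x y * (sq2 x y + y) ≠ 0 := by positivity
  have h3 := hd.inv hne
  have h4 : HasDerivAt (fun y => Gf x y)
      (-((y / sq2 x y) * (sq2 x y + y) + sq2 x y * (y / sq2 x y + 1)) /
        (sq2 x y * (sq2 x y + y))^2) y := by
    have e : (fun y => Gf x y) = (fun y => sq2 x y * (sq2 x y + y))⁻¹ := by
      funext t
      simp only [Gf, Pi.inv_apply, one_div]
    rw [e]
    exact h3
  convert h4 using 1
  rw [psiR, rpow_three_halves _ (by positivity)]
  rw [show Real.sqrt (x^2+y^2) = sq2 x y from rfl]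
  field_simp
  ring

lemma hasDerivAt_Hf (y : ℝ) (hy : 0 < y) (x : ℝ) (hx : 0 < x) :
    HasDerivAt (fun x => Hf x y) (-(Gf x y)) x := by
  have hs : 0 < sq2 x y := sq2_pos x y hx
  have hsy : 0 < sq2 x y + y := by linarith
  have hs2 : sq2 x y ^2 = x^2 + y^2 := sq2_sq x y
  have hnum : HasDerivAt (fun x => x + y - sq2 x y) (1 - x / sq2 x y) x :=
    ((hasDerivAt_id x).add_const y).sub (hasDerivAt_sq2' x y hy)
  have hden : HasDerivAt (fun x : ℝ => x * y) y x := by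
    simpa using (hasDerivAt_id x).mul_const y
  have hd := hnum.div hden (by positivity)
  have heq : ((1 - x / sq2 x y) * (x*y) - (x + y - sq2 x y) * y) / (x*y)^2
      = -(Gf x y) := by
    rw [Gf]
    field_simp
    linear_combination (sq2 x y) * hs2
  simp only [Hf]
  rw [← heq]
  exact hd


lemma key_tail (g : ℕ → ℝ) (F ψ : ℝ → ℝ) (k : ℕ)
    (hg0 : ∀ n, 0 ≤ g n)
    (hge : ∀ n : ℕ, k ≤ n → ψ n ≤ g n)
    (hderiv : ∀ x : ℝ, (k:ℝ) ≤ x → HasDerivAt F (-ψ x) x)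
    (hanti : ∀ x y : ℝ, (k:ℝ) ≤ x → x ≤ y → ψ y ≤ ψ x)
    (hF0 : Tendsto F atTop (nhds 0))
    (hsum : Summable g) :
    F k ≤ ∑' n, g n := by
  have step : ∀ n : ℕ, k ≤ n → F n - F ((n:ℝ)+1) ≤ g n := by
    intro n hn
    have hn' : (k:ℝ) ≤ n := Nat.cast_le.mpr hn
    have hlt : (n:ℝ) < (n:ℝ)+1 := by linarith
    have hcont : ContinuousOn F (Set.Icc (n:ℝ) ((n:ℝ)+1)) := fun x hx =>
      ((hderiv x (le_trans hn' hx.1)).continuousAt).continuousWithinAt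
    obtain ⟨c, hc, hceq⟩ := exists_hasDerivAt_eq_slope F (fun x => -ψ x) hlt hcont
      (fun x hx => hderiv x (le_trans hn' (le_of_lt hx.1)))
    have h1 : F n - F ((n:ℝ)+1) = ψ c := by
      have h0 : -ψ c = (F ((n:ℝ)+1) - F n) / ((n:ℝ)+1 - n) := hceq
      rw [show ((n:ℝ)+1 - n) = 1 by ring, div_one] at h0
      linarith
    have h2 : ψ c ≤ ψ n := hanti n c hn' (le_of_lt hc.1)
    linarith [hge n hn]
  have tel : ∀ b : ℕ, k ≤ b → F k - F b ≤ ∑ n ∈ Finset.Ico k b, g n := by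
    intro b hb
    have h1 : ∑ n ∈ Finset.Ico k b, (F n - F ((n:ℝ)+1)) = F k - F b := by
      rw [Finset.sum_Ico_eq_sum_range]
      calc ∑ i ∈ Finset.range (b-k), (F ((k+i:ℕ)) - F (((k+i:ℕ):ℝ)+1))
          = ∑ i ∈ Finset.range (b-k),
              ((fun j => F ((k+j:ℕ))) i - (fun j => F ((k+j:ℕ))) (i+1)) := by
            apply Finset.sum_congr rfl; intro i _
            simp only
            have : (((k+i:ℕ)):ℝ) + 1 = (((k+(i+1):ℕ)):ℝ) := by push_cast; ring
            rw [this]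
        _ = F ((k+0:ℕ)) - F ((k+(b-k) : ℕ)) := Finset.sum_range_sub' _ _
        _ = F k - F b := by rw [Nat.add_zero, Nat.add_sub_cancel' hb]
    calc F k - F b = ∑ n ∈ Finset.Ico k b, (F n - F ((n:ℝ)+1)) := h1.symm
      _ ≤ ∑ n ∈ Finset.Ico k b, g n :=
          Finset.sum_le_sum (fun n hn => step n (Finset.mem_Ico.mp hn).1)
  have hb2 : ∀ b : ℕ, F k - F ((k + b : ℕ)) ≤ ∑' n, g n := fun b =>
    le_trans (tel (k+b) (Nat.le_add_right _ _))
      (Summable.sum_le_tsum _ (fun i _ => hg0 i) hsum)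
  have hcast : Tendsto (fun b : ℕ => ((k + b : ℕ):ℝ)) atTop atTop := by
    have h1 : Tendsto (fun b : ℕ => k + b) atTop atTop := by
      simpa [add_comm] using tendsto_add_atTop_nat k
    exact tendsto_natCast_atTop_atTop.comp h1
  have hFn : Tendsto (fun b : ℕ => F k - F ((k + b : ℕ))) atTop (nhds (F k - 0)) :=
    tendsto_const_nhds.sub (hF0.comp hcast)
  have := le_of_tendsto hFn (Eventually.of_forall hb2)
  simpa using this




-- cube lower bound for the 3/2-power
lemma cube_le_rpow (a b : ℝ) (ha : 0 ≤ a) (hb : 0 ≤ b) :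
    a^3 ≤ (b + a^2) ^ ((3:ℝ)/2) := by
  rw [rpow_three_halves _ (by positivity)]
  have h1 : a ≤ Real.sqrt (b + a^2) := by
    conv_lhs => rw [← Real.sqrt_sq ha]
    exact Real.sqrt_le_sqrt (by nlinarith)
  exact pow_le_pow_left₀ ha h1 3

lemma summable_inner (n k : ℕ) (hk : 1 ≤ k) :
    Summable (fun n₂ : ℕ => if k ≤ n₂ then psiR (n:ℝ) (n₂:ℝ) else 0) := by
  apply Summable.of_nonneg_of_le (f := fun n₂ : ℕ => 1/(n₂:ℝ)^3)
    (fun b => ?_) (fun b => ?_) (Real.summable_one_div_nat_pow.mpr (by norm_num))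
  · split
    · rw [psiR]; positivity
    · exact le_refl 0
  · split
    · rename_i hb
      have hb' : (0:ℝ) < b := by
        have : 1 ≤ b := le_trans hk hb
        exact_mod_cast Nat.lt_of_lt_of_le Nat.zero_lt_one this
      rw [psiR]
      apply one_div_le_one_div_of_le
      · positivity
      · exact cube_le_rpow (b:ℝ) ((n:ℝ)^2) (by positivity) (by positivity)
    · positivity

lemma tendsto_Gf (x : ℝ) (hx : 0 < x) :
    Tendsto (fun y => Gf x y) atTop (nhds 0) := by
  apply squeeze_zero' (g := fun y : ℝ => (y^2)⁻¹)
  · filter_upwards [eventually_ge_atTop (0:ℝ)] with y hy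
    rw [Gf]
    have := sq2_nonneg x y
    positivity
  · filter_upwards [eventually_ge_atTop (1:ℝ)] with y hy
    rw [Gf, one_div]
    have hy0 : (0:ℝ) < y := by linarith
    have h1 : y ≤ sq2 x y := le_sq2_right x y (by linarith)
    have h2 : y^2 ≤ sq2 x y * (sq2 x y + y) := by nlinarith [sq2_nonneg x y]
    exact inv_anti₀ (by positivity) h2
  · have h1 : Tendsto (fun y : ℝ => y^2) atTop atTop := tendsto_pow_atTop (two_ne_zero)
    exact h1.inv_tendsto_atTop

lemma tendsto_Hf (k : ℝ) (hk : 0 < k) :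
    Tendsto (fun x => Hf x k) atTop (nhds 0) := by
  apply squeeze_zero' (g := fun x : ℝ => 1/x)
  · filter_upwards [eventually_ge_atTop (1:ℝ)] with x hx
    rw [Hf]
    have h1 : sq2 x k ≤ x + k := sq2_le_add x k (by linarith) (le_of_lt hk)
    have h2 : (0:ℝ) < x := by linarith
    apply div_nonneg (by linarith) (by positivity)
  · filter_upwards [eventually_ge_atTop (1:ℝ)] with x hx
    have h2 : (0:ℝ) < x := by linarith
    have h1 : x ≤ sq2 x k := le_sq2_left x k (le_of_lt h2)
    rw [Hf]
    rw [div_le_div_iff₀ (by positivity) h2]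
    nlinarith [h1, hk]
  · simpa [one_div] using tendsto_inv_atTop_zero

lemma inner_tail (n k : ℕ) (hn : 1 ≤ n) (hk : 1 ≤ k) :
    Gf (n:ℝ) (k:ℝ) ≤ ∑' n₂ : ℕ, (if k ≤ n₂ then psiR (n:ℝ) (n₂:ℝ) else 0) := by
  have hn' : (0:ℝ) < n := by exact_mod_cast Nat.lt_of_lt_of_le Nat.zero_lt_one hn
  have hk' : (1:ℝ) ≤ k := by exact_mod_cast hk
  apply key_tail (F := fun y => Gf (n:ℝ) y) (ψ := fun y => psiR (n:ℝ) y)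
  · intro m; split
    · rw [psiR]; positivity
    · exact le_refl 0
  · intro m hm; simp [hm]
  · intro x hx; exact hasDerivAt_Gf n hn' x (by linarith)
  · intro x y hx hxy
    rw [psiR, psiR]
    apply one_div_le_one_div_of_le (by positivity)
    apply Real.rpow_le_rpow (by positivity) (by nlinarith) (by norm_num)
  · exact tendsto_Gf n hn'
  · exact summable_inner n k hk

lemma summable_Gf_ite (j k : ℕ) (hj : 1 ≤ j) (hk : 1 ≤ k) :
    Summable (fun n : ℕ => if j ≤ n then Gf (n:ℝ) (k:ℝ) else 0) := by
  apply Summable.of_nonneg_of_le (f := fun n : ℕ => 1/(n:ℝ)^2)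
    (fun b => ?_) (fun b => ?_) (Real.summable_one_div_nat_pow.mpr (by norm_num))
  · split
    · rw [Gf]
      have h1 := sq2_nonneg (b:ℝ) (k:ℝ)
      have hk' : (0:ℝ) ≤ k := by positivity
      positivity
    · exact le_refl 0
  · split
    · rename_i hb
      have hb1 : (1:ℝ) ≤ b := by
        exact_mod_cast le_trans hj hb
      rw [Gf, one_div, one_div]
      apply inv_anti₀ (by positivity)
      have h1 : (b:ℝ) ≤ sq2 b k := le_sq2_left _ _ (by linarith)
      have hk0 : (0:ℝ) ≤ k := by positivity
      nlinarith [sq2_nonneg (b:ℝ) (k:ℝ)]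
    · positivity

lemma outer_tail (j k : ℕ) (hj : 1 ≤ j) (hk : 1 ≤ k) :
    Hf (j:ℝ) (k:ℝ) ≤ ∑' n : ℕ, (if j ≤ n then Gf (n:ℝ) (k:ℝ) else 0) := by
  have hj' : (1:ℝ) ≤ j := by exact_mod_cast hj
  have hk' : (1:ℝ) ≤ k := by exact_mod_cast hk
  have hk0 : (0:ℝ) < k := by linarith
  apply key_tail (F := fun x => Hf x (k:ℝ)) (ψ := fun x => Gf x (k:ℝ))
  · intro m; split
    · rw [Gf]
      have := sq2_nonneg (m:ℝ) (k:ℝ)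
      positivity
    · exact le_refl 0
  · intro m hm; simp [hm]
  · intro x hx; exact hasDerivAt_Hf (k:ℝ) hk0 x (by linarith)
  · intro x y hx hxy
    have hx0 : (0:ℝ) < x := by linarith
    rw [Gf, Gf]
    apply one_div_le_one_div_of_le
    · have := sq2_pos x k hx0; positivity
    · have h1 : sq2 x k ≤ sq2 y k := by
        rw [sq2, sq2]; exact Real.sqrt_le_sqrt (by nlinarith)
      have h2 := sq2_pos x k hx0
      nlinarith
  · exact tendsto_Hf k hk0
  · exact summable_Gf_ite j k hj hk



lemma sum_Icc_telescope (f : ℕ → ℝ) (a b : ℕ) (hab : a ≤ b + 1) :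
    ∑ k ∈ Finset.Icc a b, (f k - f (k+1)) = f a - f (b+1) := by
  induction b with
  | zero =>
    have : a = 0 ∨ a = 1 := by omega
    rcases this with rfl | rfl
    · simp
    · simp [Finset.Icc_eq_empty_of_lt]
  | succ b ih =>
    by_cases ha : a ≤ b + 1
    · rw [Finset.sum_Icc_succ_top (by omega), ih ha]
      ring
    · have : a = b + 2 := by omega
      subst this
      rw [Finset.Icc_eq_empty (by omega)]
      simp

lemma gauss_Icc (h : ℕ) : ∑ j ∈ Finset.Icc 1 h, (j:ℝ) = h*(h+1)/2 := by
  induction h with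
  | zero => simp
  | succ h ih =>
    rw [Finset.sum_Icc_succ_top (by omega), ih]
    push_cast; ring

lemma log32_lb : (1024:ℝ)/2526 ≤ Real.log 3 - Real.log 2 := by
  have e1 : ((2526:ℝ)/2525)^1024 ≤ 3/2 := by
    rw [show (1024:ℕ) = 256*4 from rfl, pow_mul]; norm_num
  have e2 : Real.log (((2526:ℝ)/2525)^1024) ≤ Real.log (3/2) :=
    Real.log_le_log (by positivity) e1
  rw [Real.log_pow,
    show Real.log ((3:ℝ)/2) = Real.log 3 - Real.log 2 from
      Real.log_div (by norm_num) (by norm_num)] at e2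
  have e3 : Real.log ((2525:ℝ)/2526) ≤ (2525:ℝ)/2526 - 1 :=
    Real.log_le_sub_one_of_pos (by norm_num)
  rw [show (2525:ℝ)/2526 = ((2526:ℝ)/2525)⁻¹ by norm_num, Real.log_inv] at e3
  have e4 : (1:ℝ)/2526 ≤ Real.log ((2526:ℝ)/2525) := by
    have h5 : ((2526:ℝ)/2525)⁻¹ - 1 = -(1/2526) := by norm_num
    rw [h5] at e3; linarith
  push_cast at e2
  nlinarith [e2, e4]

lemma T1_bound (h : ℕ) (hh : 1 ≤ h) :
    Real.log 3 - Real.log 2 - 1/(6*(h:ℝ)) ≤ ∑ k ∈ Finset.Icc (2*h+1) (3*h), 1/(k:ℝ) := by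
  have step : ∀ k ∈ Finset.Icc (2*h+1) (3*h),
      Real.log ((k:ℝ)+1) - Real.log (k:ℝ) ≤ 1/(k:ℝ) := by
    intro k hk
    have hk1 : 2*h+1 ≤ k := (Finset.mem_Icc.mp hk).1
    have hkR : (1:ℝ) ≤ k := by exact_mod_cast Nat.one_le_iff_ne_zero.mpr (by omega)
    have hkpos : (0:ℝ) < k := by linarith
    have h1 : Real.log (((k:ℝ)+1)/k) ≤ ((k:ℝ)+1)/k - 1 :=
      Real.log_le_sub_one_of_pos (by positivity)
    rw [Real.log_div (by positivity) (by positivity)] at h1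
    have h2 : ((k:ℝ)+1)/k - 1 = 1/k := by field_simp; ring
    linarith [h1, h2.le]
  have tele : ∑ k ∈ Finset.Icc (2*h+1) (3*h), (Real.log ((k:ℝ)+1) - Real.log (k:ℝ))
      = Real.log (((3*h+1:ℕ)):ℝ) - Real.log (((2*h+1:ℕ)):ℝ) := by
    have e := sum_Icc_telescope (fun k : ℕ => -Real.log (k:ℝ)) (2*h+1) (3*h) (by omega)
    calc ∑ k ∈ Finset.Icc (2*h+1) (3*h), (Real.log ((k:ℝ)+1) - Real.log (k:ℝ))
        = ∑ k ∈ Finset.Icc (2*h+1) (3*h),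
            ((fun k : ℕ => -Real.log (k:ℝ)) k - (fun k : ℕ => -Real.log (k:ℝ)) (k+1)) := by
          apply Finset.sum_congr rfl; intro k _
          simp only; push_cast; ring
      _ = -Real.log (((2*h+1:ℕ)):ℝ) - (-Real.log (((3*h+1:ℕ)):ℝ)) := e
      _ = Real.log (((3*h+1:ℕ)):ℝ) - Real.log (((2*h+1:ℕ)):ℝ) := by ring
  have hA : (0:ℝ) < ((2*h+1:ℕ):ℝ) := by positivity
  have hB : (0:ℝ) < ((3*h+1:ℕ):ℝ) := by positivity
  have lg1 : Real.log (((6*h+3:ℕ)):ℝ) = Real.log 3 + Real.log (((2*h+1:ℕ)):ℝ) := by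
    rw [show (((6*h+3:ℕ)):ℝ) = 3 * (((2*h+1:ℕ)):ℝ) by push_cast; ring]
    exact Real.log_mul (by norm_num) (by positivity)
  have lg2 : Real.log (((6*h+2:ℕ)):ℝ) = Real.log 2 + Real.log (((3*h+1:ℕ)):ℝ) := by
    rw [show (((6*h+2:ℕ)):ℝ) = 2 * (((3*h+1:ℕ)):ℝ) by push_cast; ring]
    exact Real.log_mul (by norm_num) (by positivity)
  have lg3 : Real.log ((((6*h+3:ℕ)):ℝ)/(((6*h+2:ℕ)):ℝ))
      ≤ 1/(((6*h+2:ℕ)):ℝ) := by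
    have hp : (0:ℝ) < ((6*h+2:ℕ):ℝ) := by positivity
    have := Real.log_le_sub_one_of_pos
      (show (0:ℝ) < (((6*h+3:ℕ)):ℝ)/(((6*h+2:ℕ)):ℝ) by positivity)
    have e : (((6*h+3:ℕ)):ℝ)/(((6*h+2:ℕ)):ℝ) - 1 = 1/(((6*h+2:ℕ)):ℝ) := by
      field_simp; push_cast; ring
    linarith [e.le]
  have lg4 : Real.log ((((6*h+3:ℕ)):ℝ)/(((6*h+2:ℕ)):ℝ))
      = Real.log (((6*h+3:ℕ)):ℝ) - Real.log (((6*h+2:ℕ)):ℝ) :=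
    Real.log_div (by positivity) (by positivity)
  have hfrac : 1/(((6*h+2:ℕ)):ℝ) ≤ 1/(6*(h:ℝ)) := by
    have h1 : (0:ℝ) < 6*(h:ℝ) := by
      have : (1:ℝ) ≤ h := by exact_mod_cast hh
      linarith
    apply one_div_le_one_div_of_le h1
    push_cast; linarith
  have := Finset.sum_le_sum step
  rw [tele] at this
  linarith [this, lg1, lg2, lg3, lg4, hfrac]

lemma T2_bound (h : ℕ) (hh : 1 ≤ h) :
    ∑ k ∈ Finset.Icc (2*h+1) (3*h), 1/(2*(k:ℝ)^2) ≤ 1/(4*(h:ℝ)) - 1/(6*(h:ℝ)) := by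
  have hR : (1:ℝ) ≤ h := by exact_mod_cast hh
  have step : ∀ k ∈ Finset.Icc (2*h+1) (3*h),
      1/(2*(k:ℝ)^2) ≤ (fun k : ℕ => 1/(2*((k:ℝ)-1))) k - (fun k : ℕ => 1/(2*((k:ℝ)-1))) (k+1) := by
    intro k hk
    have hk1 : 2*h+1 ≤ k := (Finset.mem_Icc.mp hk).1
    have hkR : (3:ℝ) ≤ k := by
      have : 3 ≤ k := by omega
      exact_mod_cast this
    simp only
    push_cast
    rw [div_sub_div _ _ (by nlinarith) (by nlinarith), div_le_div_iff₀ (by nlinarith) (by nlinarith)]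
    ring_nf
    nlinarith
  have tele := sum_Icc_telescope (fun k : ℕ => 1/(2*((k:ℝ)-1))) (2*h+1) (3*h) (by omega)
  calc ∑ k ∈ Finset.Icc (2*h+1) (3*h), 1/(2*(k:ℝ)^2)
      ≤ ∑ k ∈ Finset.Icc (2*h+1) (3*h),
        ((fun k : ℕ => 1/(2*((k:ℝ)-1))) k - (fun k : ℕ => 1/(2*((k:ℝ)-1))) (k+1)) :=
        Finset.sum_le_sum step
    _ = 1/(2*(((2*h+1:ℕ)):ℝ)-2) - 1/(2*(((3*h+1:ℕ)):ℝ)-2) := by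
        rw [tele]; push_cast; ring_nf
    _ = 1/(4*(h:ℝ)) - 1/(6*(h:ℝ)) := by
        push_cast
        rw [show 2*(2*(h:ℝ)+1)-2 = 4*h by ring, show 2*(3*(h:ℝ)+1)-2 = 6*h by ring]

lemma Hf_ge (j k : ℕ) (hj : 1 ≤ j) (hk : 1 ≤ k) :
    1/(k:ℝ) - (j:ℝ)/(2*(k:ℝ)^2) ≤ Hf (j:ℝ) (k:ℝ) := by
  have hjR : (1:ℝ) ≤ j := by exact_mod_cast hj
  have hkR : (1:ℝ) ≤ k := by exact_mod_cast hk
  have hj0 : (0:ℝ) < j := by linarith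
  have hk0 : (0:ℝ) < k := by linarith
  set x := (j:ℝ); set y := (k:ℝ)
  have hU : sq2 x y ≤ y + x^2/(2*y) := by
    have h0 : (0:ℝ) ≤ y + x^2/(2*y) := by positivity
    conv_rhs => rw [← Real.sqrt_sq h0]
    rw [sq2]
    apply Real.sqrt_le_sqrt
    have : (y + x^2/(2*y))^2 = y^2 + x^2 + x^4/(4*y^2) := by field_simp; ring
    rw [this]
    have : (0:ℝ) ≤ x^4/(4*y^2) := by positivity
    linarith
  rw [Hf]
  have h1 : (x + y - (y + x^2/(2*y)))/(x*y) ≤ (x + y - sq2 x y)/(x*y) := by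
    have hnum : x + y - (y + x^2/(2*y)) ≤ x + y - sq2 x y := by linarith [hU]
    gcongr
  have h2 : (x + y - (y + x^2/(2*y)))/(x*y) = 1/y - x/(2*y^2) := by
    field_simp; ring
  linarith [h1, h2.le, h2.ge]

lemma numeric_final (h : ℕ) (hh : 100 ≤ h) :
    0.36 * (h:ℝ) ≤ ∑ j ∈ Finset.Icc 1 h, ∑ k ∈ Finset.Icc (2*h+1) (3*h), Hf (j:ℝ) (k:ℝ) := by
  have hh1 : 1 ≤ h := by omega
  have hR : (100:ℝ) ≤ h := by exact_mod_cast hh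
  have hx0 : (0:ℝ) < h := by linarith
  have step1 : ∑ j ∈ Finset.Icc 1 h, ∑ k ∈ Finset.Icc (2*h+1) (3*h),
      (1/(k:ℝ) - (j:ℝ) * (1/(2*(k:ℝ)^2)))
      ≤ ∑ j ∈ Finset.Icc 1 h, ∑ k ∈ Finset.Icc (2*h+1) (3*h), Hf (j:ℝ) (k:ℝ) := by
    apply Finset.sum_le_sum; intro j hj
    apply Finset.sum_le_sum; intro k hk
    have hj1 : 1 ≤ j := (Finset.mem_Icc.mp hj).1
    have hk1 : 1 ≤ k := by
      have := (Finset.mem_Icc.mp hk).1; omega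
    have := Hf_ge j k hj1 hk1
    have e : (j:ℝ)/(2*(k:ℝ)^2) = (j:ℝ) * (1/(2*(k:ℝ)^2)) := by ring
    linarith [e.le, e.ge]
  have split : ∑ j ∈ Finset.Icc 1 h, ∑ k ∈ Finset.Icc (2*h+1) (3*h),
      (1/(k:ℝ) - (j:ℝ) * (1/(2*(k:ℝ)^2)))
      = (h:ℝ) * (∑ k ∈ Finset.Icc (2*h+1) (3*h), 1/(k:ℝ))
        - (∑ j ∈ Finset.Icc 1 h, (j:ℝ)) * (∑ k ∈ Finset.Icc (2*h+1) (3*h), 1/(2*(k:ℝ)^2)) := by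
    rw [Finset.sum_mul_sum]
    have hcard : (Finset.Icc 1 h).card = h := by
      rw [Nat.card_Icc]; omega
    calc ∑ j ∈ Finset.Icc 1 h, ∑ k ∈ Finset.Icc (2*h+1) (3*h),
          (1/(k:ℝ) - (j:ℝ) * (1/(2*(k:ℝ)^2)))
        = ∑ j ∈ Finset.Icc 1 h, ((∑ k ∈ Finset.Icc (2*h+1) (3*h), 1/(k:ℝ))
            - ∑ k ∈ Finset.Icc (2*h+1) (3*h), (j:ℝ) * (1/(2*(k:ℝ)^2))) := by
          apply Finset.sum_congr rfl; intro j _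
          rw [← Finset.sum_sub_distrib]
      _ = (h:ℝ) * (∑ k ∈ Finset.Icc (2*h+1) (3*h), 1/(k:ℝ))
            - ∑ j ∈ Finset.Icc 1 h, ∑ k ∈ Finset.Icc (2*h+1) (3*h), (j:ℝ) * (1/(2*(k:ℝ)^2)) := by
          rw [Finset.sum_sub_distrib, Finset.sum_const, hcard]
          simp [nsmul_eq_mul]
  have hT1 := T1_bound h hh1
  have hT2 := T2_bound h hh1
  have hT2pos : 0 ≤ ∑ k ∈ Finset.Icc (2*h+1) (3*h), 1/(2*(k:ℝ)^2) :=
    Finset.sum_nonneg (fun k _ => by positivity)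
  have hgauss := gauss_Icc h
  have hlog := log32_lb
  have hgpos : (0:ℝ) ≤ (h:ℝ)*((h:ℝ)+1)/2 := by positivity
  -- combine
  have c1 : (h:ℝ) * (Real.log 3 - Real.log 2 - 1/(6*(h:ℝ)))
      ≤ (h:ℝ) * (∑ k ∈ Finset.Icc (2*h+1) (3*h), 1/(k:ℝ)) :=
    mul_le_mul_of_nonneg_left hT1 (le_of_lt hx0)
  have c2 : (∑ j ∈ Finset.Icc 1 h, (j:ℝ)) * (∑ k ∈ Finset.Icc (2*h+1) (3*h), 1/(2*(k:ℝ)^2))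
      ≤ ((h:ℝ)*((h:ℝ)+1)/2) * (1/(4*(h:ℝ)) - 1/(6*(h:ℝ))) := by
    rw [hgauss]
    exact mul_le_mul_of_nonneg_left hT2 hgpos
  have main : 0.36 * (h:ℝ) ≤ (h:ℝ) * (Real.log 3 - Real.log 2 - 1/(6*(h:ℝ)))
      - ((h:ℝ)*((h:ℝ)+1)/2) * (1/(4*(h:ℝ)) - 1/(6*(h:ℝ))) := by
    have e1 : (h:ℝ) * (Real.log 3 - Real.log 2 - 1/(6*(h:ℝ)))
        = (h:ℝ)*(Real.log 3 - Real.log 2) - 1/6 := by field_simp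
    have e2 : ((h:ℝ)*((h:ℝ)+1)/2) * (1/(4*(h:ℝ)) - 1/(6*(h:ℝ))) = ((h:ℝ)+1)/24 := by
      field_simp; ring
    rw [e1, e2]
    nlinarith [hlog, hR]
  linarith [step1, split.le, split.ge, c1, c2, main]




-- q n = n^{-3/2}
noncomputable def qq (m : ℕ) : ℝ := 1/((m:ℝ) ^ ((3:ℝ)/2))

lemma summable_qq : Summable qq := Real.summable_one_div_nat_rpow.mpr (by norm_num)

lemma qq_nonneg (m : ℕ) : 0 ≤ qq m := by rw [qq]; positivity

lemma psi_le_qq (n m : ℕ) (hn : 1 ≤ n) (hm : 1 ≤ m) :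
    psiR (n:ℝ) (m:ℝ) ≤ qq n * qq m := by
  have hn' : (1:ℝ) ≤ n := by exact_mod_cast hn
  have hm' : (1:ℝ) ≤ m := by exact_mod_cast hm
  rw [psiR, qq, qq, div_mul_div_comm, one_mul]
  apply one_div_le_one_div_of_le
  · positivity
  · rw [← Real.mul_rpow (by positivity) (by positivity)]
    apply Real.rpow_le_rpow (by positivity) (by nlinarith) (by norm_num)

lemma Gf_nonneg (x y : ℝ) (hy : 0 ≤ y) : 0 ≤ Gf x y := by
  rw [Gf]
  have := sq2_nonneg x y
  positivity

lemma Gf_le_inv_sq (n k : ℕ) (hn : 1 ≤ n) : Gf (n:ℝ) (k:ℝ) ≤ 1/(n:ℝ)^2 := by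
  have hn' : (1:ℝ) ≤ n := by exact_mod_cast hn
  rw [Gf]
  apply one_div_le_one_div_of_le (by positivity)
  have h1 : (n:ℝ) ≤ sq2 n k := le_sq2_left _ _ (by linarith)
  have hk0 : (0:ℝ) ≤ k := by positivity
  nlinarith [sq2_nonneg (n:ℝ) (k:ℝ)]

section main
variable (h : ℕ)

-- the inner tsum appearing in the statement
noncomputable def innerS (n : ℕ) : ℝ :=
  ∑' n₂ : ℕ, (if 2*h < n₂ then
    min ((n₂:ℝ) - 2*(h:ℝ)) (h:ℝ) / (((n:ℝ)^2 + (n₂:ℝ)^2) ^ ((3:ℝ)/2)) else 0)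

noncomputable def tailS (n k : ℕ) : ℝ := ∑' n₂ : ℕ, (if k ≤ n₂ then psiR (n:ℝ) (n₂:ℝ) else 0)

lemma inner_eq (hh : 1 ≤ h) (n : ℕ) :
    innerS h n = ∑ k ∈ Finset.Icc (2*h+1) (3*h), tailS n k := by
  simp only [innerS, tailS]
  rw [← Summable.tsum_finsetSum (fun k hk => summable_inner n k (by
    have := (Finset.mem_Icc.mp hk).1; omega))]
  apply tsum_congr
  intro n₂
  have hfilter : (Finset.Icc (2*h+1) (3*h)).filter (fun k => k ≤ n₂)
      = Finset.Icc (2*h+1) (min (3*h) n₂) := by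
    ext k; simp only [Finset.mem_filter, Finset.mem_Icc]; omega
  have hsum : ∑ k ∈ Finset.Icc (2*h+1) (3*h), (if k ≤ n₂ then psiR (n:ℝ) (n₂:ℝ) else 0)
      = ((min (3*h) n₂ + 1 - (2*h+1) : ℕ) : ℝ) * psiR (n:ℝ) (n₂:ℝ) := by
    rw [← Finset.sum_filter, hfilter, Finset.sum_const, Nat.card_Icc, nsmul_eq_mul]
  rw [hsum]
  by_cases hc : 2*h < n₂
  · rw [if_pos hc, psiR]
    have hcast : ((min (3*h) n₂ + 1 - (2*h+1) : ℕ) : ℝ) = min ((n₂:ℝ) - 2*(h:ℝ)) (h:ℝ) := by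
      rcases le_total n₂ (3*h) with hle | hle
      · rw [min_eq_right hle]
        have h1 : ((n₂ + 1 - (2*h+1) : ℕ) : ℝ) = (n₂:ℝ) - 2*h := by
          rw [Nat.cast_sub (by omega)]; push_cast; ring
        rw [h1, min_eq_left]
        have : (n₂ : ℝ) ≤ 3*h := by exact_mod_cast hle
        linarith
      · rw [min_eq_left hle]
        have h1 : ((3*h + 1 - (2*h+1) : ℕ) : ℝ) = (h:ℝ) := by
          rw [Nat.cast_sub (by omega)]; push_cast; ring
        rw [h1, min_eq_right]
        have : (3*(h:ℝ)) ≤ n₂ := by exact_mod_cast hle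
        linarith
    rw [hcast]
    ring
  · rw [if_neg hc]
    have : min (3*h) n₂ + 1 - (2*h+1) = 0 := by omega
    rw [this]
    simp

end main

section main2
variable (h : ℕ)

lemma tailS_nonneg (n k : ℕ) : 0 ≤ tailS n k := by
  rw [tailS]
  apply tsum_nonneg
  intro m
  split
  · rw [psiR]; positivity
  · exact le_refl 0

lemma tailS_le (n k : ℕ) (hn : 1 ≤ n) (hk : 1 ≤ k) :
    tailS n k ≤ qq n * (∑' m, qq m) := by
  rw [tailS, ← tsum_mul_left]
  apply Summable.tsum_le_tsum _ (summable_inner n k hk) (summable_qq.mul_left (qq n))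
  intro m
  split
  · rename_i hm
    exact psi_le_qq n m hn (le_trans hk hm)
  · exact mul_nonneg (qq_nonneg n) (qq_nonneg m)

noncomputable def aS (n : ℕ) : ℝ := min (n:ℝ) (h:ℝ) * innerS h n

noncomputable def bS (n : ℕ) : ℝ :=
  ∑ j ∈ Finset.Icc 1 h, ∑ k ∈ Finset.Icc (2*h+1) (3*h),
    (if j ≤ n then Gf (n:ℝ) (k:ℝ) else 0)

lemma bS_zero : bS h 0 = 0 := by
  rw [bS]
  apply Finset.sum_eq_zero
  intro j hj
  apply Finset.sum_eq_zero
  intro k _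
  rw [if_neg]
  have := (Finset.mem_Icc.mp hj).1
  omega

lemma bS_nonneg (n : ℕ) : 0 ≤ bS h n := by
  apply Finset.sum_nonneg; intro j _
  apply Finset.sum_nonneg; intro k _
  split
  · exact Gf_nonneg _ _ (by positivity)
  · exact le_refl 0

lemma bS_le_aS (hh : 1 ≤ h) (m : ℕ) : bS h (m+1) ≤ aS h (m+1) := by
  set n := m + 1 with hn
  have hn1 : 1 ≤ n := by omega
  have key : ∀ k ∈ Finset.Icc (2*h+1) (3*h), Gf (n:ℝ) (k:ℝ) ≤ tailS n k := by
    intro k hk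
    have hk1 : 1 ≤ k := by have := (Finset.mem_Icc.mp hk).1; omega
    exact inner_tail n k hn1 hk1
  have e1 : bS h n = ((min h n : ℕ):ℝ) * ∑ k ∈ Finset.Icc (2*h+1) (3*h), Gf (n:ℝ) (k:ℝ) := by
    rw [bS]
    have e2 : ∀ j : ℕ, (∑ k ∈ Finset.Icc (2*h+1) (3*h), (if j ≤ n then Gf (n:ℝ) (k:ℝ) else 0))
        = (if j ≤ n then (∑ k ∈ Finset.Icc (2*h+1) (3*h), Gf (n:ℝ) (k:ℝ)) else 0) := by
      intro j; split <;> simp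
    simp only [e2]
    rw [← Finset.sum_filter]
    have hfil : (Finset.Icc 1 h).filter (fun j => j ≤ n) = Finset.Icc 1 (min h n) := by
      ext j; simp only [Finset.mem_filter, Finset.mem_Icc]; omega
    rw [hfil, Finset.sum_const, Nat.card_Icc, nsmul_eq_mul]
    have : min h n + 1 - 1 = min h n := by omega
    rw [this]
  rw [e1, aS, inner_eq h hh n]
  have hmin : ((min h n : ℕ):ℝ) = min (n:ℝ) (h:ℝ) := by
    rw [Nat.cast_min, min_comm]
  rw [hmin]
  apply mul_le_mul_of_nonneg_left (Finset.sum_le_sum key)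
  have : (0:ℝ) ≤ (n:ℝ) := by positivity
  have : (0:ℝ) ≤ (h:ℝ) := by positivity
  positivity

lemma summable_ite_inv_sq : Summable (fun n : ℕ => if 1 ≤ n then 1/(n:ℝ)^2 else 0) := by
  apply Summable.of_nonneg_of_le (f := fun n : ℕ => 1/(n:ℝ)^2)
    (fun b => ?_) (fun b => ?_) (Real.summable_one_div_nat_pow.mpr (by norm_num))
  · split <;> positivity
  · split
    · exact le_refl _
    · positivity

lemma summable_bS : Summable (bS h) := by
  apply Summable.of_nonneg_of_le (fun n => bS_nonneg h n) (fun n => ?_)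
    ((summable_ite_inv_sq.mul_left ((h:ℝ)*(h:ℝ))))
  rw [bS]
  calc ∑ j ∈ Finset.Icc 1 h, ∑ k ∈ Finset.Icc (2*h+1) (3*h),
        (if j ≤ n then Gf (n:ℝ) (k:ℝ) else 0)
      ≤ ∑ j ∈ Finset.Icc 1 h, ∑ k ∈ Finset.Icc (2*h+1) (3*h),
        (if 1 ≤ n then 1/(n:ℝ)^2 else 0) := by
        apply Finset.sum_le_sum; intro j hj
        apply Finset.sum_le_sum; intro k _
        have hj1 : 1 ≤ j := (Finset.mem_Icc.mp hj).1
        split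
        · rename_i hjn
          rw [if_pos (le_trans hj1 hjn)]
          exact Gf_le_inv_sq n k (le_trans hj1 hjn)
        · have : (0:ℝ) ≤ if 1 ≤ n then 1/(n:ℝ)^2 else 0 := by
            split
            · positivity
            · exact le_refl 0
          exact this
    _ = ((Finset.Icc 1 h).card : ℝ) * (((Finset.Icc (2*h+1) (3*h)).card : ℝ)
          * (if 1 ≤ n then 1/(n:ℝ)^2 else 0)) := by
        rw [Finset.sum_const, Finset.sum_const, nsmul_eq_mul, nsmul_eq_mul]
    _ ≤ (h:ℝ)*(h:ℝ) * (if 1 ≤ n then 1/(n:ℝ)^2 else 0) := by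
        rw [Nat.card_Icc, Nat.card_Icc]
        have e1 : h + 1 - 1 = h := by omega
        have e2 : 3*h + 1 - (2*h+1) = h := by omega
        rw [e1, e2]
        exact le_of_eq (by ring)

lemma aS_nonneg (n : ℕ) : 0 ≤ aS h n := by
  rw [aS]
  apply mul_nonneg
  · have : (0:ℝ) ≤ (n:ℝ) := by positivity
    have : (0:ℝ) ≤ (h:ℝ) := by positivity
    positivity
  · rw [innerS]
    apply tsum_nonneg; intro m; split
    · apply div_nonneg _ (by positivity)
      rename_i hm
      have h1 : (2*(h:ℝ)) < m := by exact_mod_cast hm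
      have h2 : (0:ℝ) ≤ (h:ℝ) := by positivity
      rcases le_total ((m:ℝ) - 2*(h:ℝ)) ((h:ℝ)) with hc | hc
      · rw [min_eq_left hc]; linarith
      · rw [min_eq_right hc]; linarith
    · exact le_refl 0

lemma summable_aS_succ (hh : 1 ≤ h) : Summable (fun m => aS h (m+1)) := by
  have hq' : Summable (fun m : ℕ => ((h:ℝ)*(h:ℝ)*(∑' i, qq i)) * qq (m+1)) :=
    (((summable_nat_add_iff 1).mpr summable_qq).mul_left _)
  apply Summable.of_nonneg_of_le (fun m => aS_nonneg h (m+1)) (fun m => ?_) hq'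
  have hn1 : 1 ≤ m + 1 := by omega
  rw [aS, inner_eq h hh (m+1)]
  have hb1 : ∑ k ∈ Finset.Icc (2*h+1) (3*h), tailS (m+1) k
      ≤ ∑ k ∈ Finset.Icc (2*h+1) (3*h), qq (m+1) * (∑' i, qq i) := by
    apply Finset.sum_le_sum; intro k hk
    have hk1 : 1 ≤ k := by have := (Finset.mem_Icc.mp hk).1; omega
    exact tailS_le (m+1) k hn1 hk1
  have hb2 : ∑ k ∈ Finset.Icc (2*h+1) (3*h), qq (m+1) * (∑' i, qq i)
      = (h:ℝ) * (qq (m+1) * (∑' i, qq i)) := by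
    rw [Finset.sum_const, Nat.card_Icc, nsmul_eq_mul]
    congr 2
    omega
  have hmin : min ((m+1:ℕ):ℝ) (h:ℝ) ≤ (h:ℝ) := min_le_right _ _
  have hminpos : 0 ≤ min ((m+1:ℕ):ℝ) (h:ℝ) := by
    apply le_min (by positivity) (by positivity)
  have htail : ∑ k ∈ Finset.Icc (2*h+1) (3*h), tailS (m+1) k
      ≤ (h:ℝ) * (qq (m+1) * (∑' i, qq i)) := by rw [← hb2]; exact hb1
  have htn : 0 ≤ ∑ k ∈ Finset.Icc (2*h+1) (3*h), tailS (m+1) k :=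
    Finset.sum_nonneg (fun k _ => tailS_nonneg _ _)
  calc min ((m+1:ℕ):ℝ) (h:ℝ) * ∑ k ∈ Finset.Icc (2*h+1) (3*h), tailS (m+1) k
      ≤ (h:ℝ) * ((h:ℝ) * (qq (m+1) * (∑' i, qq i))) := by
        apply mul_le_mul hmin htail htn (by positivity)
    _ = (h:ℝ)*(h:ℝ)*(∑' i, qq i) * qq (m+1) := by ring

end main2


end AUX

/-- lower bound on the square–shifted-quadrant interaction:
`(1/h) Σ_{n₁≥1} min{n₁,h} Σ_{n₂>2h} min{n₂−2h,h}/(n₁²+n₂²)^{3/2} ≥ 0.36`. -/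
theorem shifted_quadrant_lower_bound :
    ∃ h₀ : ℕ, ∀ h : ℕ, h₀ ≤ h →
    (1/(h:ℝ)) * ∑' n₁ : ℕ+, min (n₁:ℝ) (h:ℝ) *
        ∑' n₂ : ℕ, (if 2*h < n₂ then
          min ((n₂:ℝ) - 2*(h:ℝ)) (h:ℝ) / (((n₁:ℝ)^2 + (n₂:ℝ)^2) ^ ((3:ℝ)/2))
        else 0)
      ≥ 0.36 := by
  use 100
  intro h hh
  have hh1 : 1 ≤ h := by omega
  have hx0 : (0:ℝ) < h := by
    have : (100:ℝ) ≤ h := by exact_mod_cast hh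
    linarith
  have eA : (∑' n₁ : ℕ+, min (n₁:ℝ) (h:ℝ) *
        ∑' n₂ : ℕ, (if 2*h < n₂ then
          min ((n₂:ℝ) - 2*(h:ℝ)) (h:ℝ) / (((n₁:ℝ)^2 + (n₂:ℝ)^2) ^ ((3:ℝ)/2))
        else 0))
      = ∑' m : ℕ, aS h (m+1) := by
    rw [← Equiv.tsum_eq Equiv.pnatEquivNat.symm]
    apply tsum_congr
    intro m
    have hc : ((Equiv.pnatEquivNat.symm m : ℕ+) : ℝ) = ((m+1 : ℕ) : ℝ) := by
      simp [Equiv.pnatEquivNat, Nat.succPNat]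
    rw [aS, innerS]
    rw [hc]
  have step1 : ∑' m : ℕ, bS h (m+1) ≤ ∑' m : ℕ, aS h (m+1) :=
    Summable.tsum_le_tsum (fun m => bS_le_aS h hh1 m)
      ((summable_nat_add_iff 1).mpr (summable_bS h)) (summable_aS_succ h hh1)
  have step2 : ∑' n : ℕ, bS h n = ∑' m : ℕ, bS h (m+1) := by
    rw [Summable.tsum_eq_zero_add (summable_bS h), bS_zero]
    ring
  have hsumjk : ∀ j ∈ Finset.Icc 1 h, ∀ k ∈ Finset.Icc (2*h+1) (3*h),
      Summable (fun n : ℕ => if j ≤ n then Gf (n:ℝ) (k:ℝ) else 0) := by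
    intro j hj k hk
    exact summable_Gf_ite j k (Finset.mem_Icc.mp hj).1
      (by have := (Finset.mem_Icc.mp hk).1; omega)
  have step3 : ∑' n : ℕ, bS h n
      = ∑ j ∈ Finset.Icc 1 h, ∑ k ∈ Finset.Icc (2*h+1) (3*h),
          ∑' n : ℕ, (if j ≤ n then Gf (n:ℝ) (k:ℝ) else 0) := by
    simp only [bS]
    rw [Summable.tsum_finsetSum (fun j hj => summable_sum (fun k hk => hsumjk j hj k hk))]
    apply Finset.sum_congr rfl
    intro j hj
    rw [Summable.tsum_finsetSum (fun k hk => hsumjk j hj k hk)]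
  have step4 : ∑ j ∈ Finset.Icc 1 h, ∑ k ∈ Finset.Icc (2*h+1) (3*h), Hf (j:ℝ) (k:ℝ)
      ≤ ∑ j ∈ Finset.Icc 1 h, ∑ k ∈ Finset.Icc (2*h+1) (3*h),
          ∑' n : ℕ, (if j ≤ n then Gf (n:ℝ) (k:ℝ) else 0) := by
    apply Finset.sum_le_sum; intro j hj
    apply Finset.sum_le_sum; intro k hk
    exact outer_tail j k (Finset.mem_Icc.mp hj).1
      (by have := (Finset.mem_Icc.mp hk).1; omega)
  have step5 := numeric_final h hh
  rw [ge_iff_le, eA]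
  rw [show (1/(h:ℝ)) * (∑' m : ℕ, aS h (m+1)) = (∑' m : ℕ, aS h (m+1))/(h:ℝ) by ring,
    le_div_iff₀ hx0]
  calc (0.36:ℝ) * h ≤ _ := step5
    _ ≤ _ := step4
    _ = ∑' n : ℕ, bS h n := step3.symm
    _ = ∑' m : ℕ, bS h (m+1) := step2
    _ ≤ ∑' m : ℕ, aS h (m+1) := step1
end
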